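/- arXiv:2302.02256 — 5 statements merged into one kernel-verified Lean document; each statement's English description precedes it below -/
import Mathlib

section
/- Let ζ₁, ζ₂, χ, κ, ν be real numbers and 0 < R < 1. Define E(v₁,v₂,u₁,u₂) = ½v₂² + ½R u₂² − R v₂ u₂ sin u₁ + ½χ² v₁² + Rκ²(1 − cos u₁). Then for all (v₁,v₂,u₁,u₂) ∈ ℝ⁴, ℒE(v₁,v₂,u₁,u₂) = −2ζ₁ v₂² − 2Rζ₂ u₂² + ν²/(2(1 − R sin² u₁)). -/
/-- The generator `ℒ` of the block-and-pendulum stochastic system, acting on a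
twice continuously differentiable function `G : ℝ⁴ → ℝ` of `(v₁, v₂, u₁, u₂)`. -/
noncomputable def genL (ζ₁ ζ₂ χ κ ν R : ℝ) (G : ℝ → ℝ → ℝ → ℝ → ℝ)
    (v₁ v₂ u₁ u₂ : ℝ) : ℝ :=
  v₂ * deriv (fun x => G x v₂ u₁ u₂) v₁
    + ((-(2 * ζ₁ * v₂) - χ ^ 2 * v₁ + R * u₂ ^ 2 * Real.cos u₁
          - 2 * R * ζ₂ * u₂ * Real.sin u₁ - R * κ ^ 2 * Real.sin u₁ ^ 2)
        / (1 - R * Real.sin u₁ ^ 2))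
      * deriv (fun x => G v₁ x u₁ u₂) v₂
    + u₂ * deriv (fun x => G v₁ v₂ x u₂) u₁
    + ((-(2 * ζ₂ * u₂) - κ ^ 2 * Real.sin u₁ - 2 * ζ₁ * v₂ * Real.sin u₁
          - χ ^ 2 * v₁ * Real.sin u₁ + R * u₂ ^ 2 * Real.sin u₁ * Real.cos u₁)
        / (1 - R * Real.sin u₁ ^ 2))
      * deriv (fun x => G v₁ v₂ u₁ x) u₂
    + (ν ^ 2 / (2 * (1 - R * Real.sin u₁ ^ 2) ^ 2))
      * (deriv (fun x => deriv (fun y => G v₁ y u₁ u₂) x) v₂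
          + 2 * Real.sin u₁ * deriv (fun x => deriv (fun y => G v₁ x u₁ y) u₂) v₂
          + Real.sin u₁ ^ 2 * deriv (fun x => deriv (fun y => G v₁ v₂ u₁ y) x) u₂)

/-- For the energy function `E`, one has
`ℒE = −2ζ₁v₂² − 2Rζ₂u₂² + ν²/(2(1 − R sin² u₁))`. -/
theorem genL_energy (ζ₁ ζ₂ χ κ ν R : ℝ) (hR0 : 0 < R) (hR1 : R < 1) :
    ∀ v₁ v₂ u₁ u₂ : ℝ,
      genL ζ₁ ζ₂ χ κ ν R
        (fun v₁ v₂ u₁ u₂ =>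
          (1 / 2) * v₂ ^ 2 + (1 / 2) * R * u₂ ^ 2 - R * v₂ * u₂ * Real.sin u₁
            + (1 / 2) * χ ^ 2 * v₁ ^ 2 + R * κ ^ 2 * (1 - Real.cos u₁))
        v₁ v₂ u₁ u₂
      = -(2 * ζ₁ * v₂ ^ 2) - 2 * R * ζ₂ * u₂ ^ 2
          + ν ^ 2 / (2 * (1 - R * Real.sin u₁ ^ 2)) := by
  intro v₁ v₂ u₁ u₂
  set s := Real.sin u₁ with hs
  set c := Real.cos u₁ with hc
  have hD : (1 : ℝ) - R * s ^ 2 ≠ 0 := by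
    have h1 : s ^ 2 ≤ 1 := Real.sin_sq_le_one u₁
    nlinarith
  -- derivative in v₁
  have hv1 : deriv (fun x : ℝ => (1/2)*v₂^2 + (1/2)*R*u₂^2 - R*v₂*u₂*s
      + (1/2)*χ^2*x^2 + R*κ^2*(1-c)) v₁ = χ^2*v₁ := by
    have h : HasDerivAt (fun x : ℝ => (1/2)*v₂^2 + (1/2)*R*u₂^2 - R*v₂*u₂*s
        + (1/2)*χ^2*x^2 + R*κ^2*(1-c)) (χ^2*v₁) v₁ := by
      have := ((((hasDerivAt_const v₁ ((1/2)*v₂^2)).add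
        (hasDerivAt_const v₁ ((1/2)*R*u₂^2))).sub
        (hasDerivAt_const v₁ (R*v₂*u₂*s))).add
        ((hasDerivAt_pow 2 v₁).const_mul ((1/2)*χ^2))).add
        (hasDerivAt_const v₁ (R*κ^2*(1-c)))
      refine this.congr_deriv ?_
      ring
    exact h.deriv
  -- derivative in v₂ slot, at an arbitrary point b
  have hv2 : ∀ b : ℝ, deriv (fun y : ℝ => (1/2)*y^2 + (1/2)*R*u₂^2 - R*y*u₂*s
      + (1/2)*χ^2*v₁^2 + R*κ^2*(1-c)) b = b - R*u₂*s := by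
    intro b
    have h : HasDerivAt (fun y : ℝ => (1/2)*y^2 + (1/2)*R*u₂^2 - R*y*u₂*s
        + (1/2)*χ^2*v₁^2 + R*κ^2*(1-c)) (b - R*u₂*s) b := by
      have := ((((hasDerivAt_pow 2 b).const_mul (1/2 : ℝ)).add
        (hasDerivAt_const b ((1/2)*R*u₂^2))).sub
        ((((hasDerivAt_id b).const_mul R).mul_const u₂).mul_const s)).add
        (hasDerivAt_const b ((1/2)*χ^2*v₁^2)) |>.add
        (hasDerivAt_const b (R*κ^2*(1-c)))
      refine this.congr_deriv ?_
      ring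
    exact h.deriv
  -- derivative in u₁
  have hu1 : deriv (fun x : ℝ => (1/2)*v₂^2 + (1/2)*R*u₂^2 - R*v₂*u₂*Real.sin x
      + (1/2)*χ^2*v₁^2 + R*κ^2*(1-Real.cos x)) u₁ = -(R*v₂*u₂*c) + R*κ^2*s := by
    have h : HasDerivAt (fun x : ℝ => (1/2)*v₂^2 + (1/2)*R*u₂^2 - R*v₂*u₂*Real.sin x
        + (1/2)*χ^2*v₁^2 + R*κ^2*(1-Real.cos x)) (-(R*v₂*u₂*c) + R*κ^2*s) u₁ := by
      have := ((((hasDerivAt_const u₁ ((1/2)*v₂^2)).add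
        (hasDerivAt_const u₁ ((1/2)*R*u₂^2))).sub
        ((Real.hasDerivAt_sin u₁).const_mul (R*v₂*u₂))).add
        (hasDerivAt_const u₁ ((1/2)*χ^2*v₁^2))).add
        (((hasDerivAt_const u₁ (1:ℝ)).sub (Real.hasDerivAt_cos u₁)).const_mul (R*κ^2))
      refine this.congr_deriv ?_
      rw [hs, hc]; ring
    exact h.deriv
  -- derivative in u₂ slot, with v₂-slot value a, at point b
  have hu2 : ∀ a b : ℝ, deriv (fun y : ℝ => (1/2)*a^2 + (1/2)*R*y^2 - R*a*y*s
      + (1/2)*χ^2*v₁^2 + R*κ^2*(1-c)) b = R*b - R*a*s := by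
    intro a b
    have h : HasDerivAt (fun y : ℝ => (1/2)*a^2 + (1/2)*R*y^2 - R*a*y*s
        + (1/2)*χ^2*v₁^2 + R*κ^2*(1-c)) (R*b - R*a*s) b := by
      have := ((((hasDerivAt_const b ((1/2)*a^2)).add
        ((hasDerivAt_pow 2 b).const_mul ((1/2)*R))).sub
        (((hasDerivAt_id b).const_mul (R*a)).mul_const s)).add
        (hasDerivAt_const b ((1/2)*χ^2*v₁^2))).add
        (hasDerivAt_const b (R*κ^2*(1-c)))
      refine this.congr_deriv ?_
      push_cast
      ring
    exact h.deriv
  -- second derivatives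
  have hvv : deriv (fun x : ℝ => deriv (fun y : ℝ => (1/2)*y^2 + (1/2)*R*u₂^2 - R*y*u₂*s
      + (1/2)*χ^2*v₁^2 + R*κ^2*(1-c)) x) v₂ = 1 := by
    have he : (fun x : ℝ => deriv (fun y : ℝ => (1/2)*y^2 + (1/2)*R*u₂^2 - R*y*u₂*s
        + (1/2)*χ^2*v₁^2 + R*κ^2*(1-c)) x) = fun x => x - R*u₂*s := funext fun b => hv2 b
    rw [he]
    have h : HasDerivAt (fun x : ℝ => x - R*u₂*s) 1 v₂ := by
      exact ((hasDerivAt_id' v₂).sub (hasDerivAt_const v₂ (R*u₂*s))).congr_deriv (sub_zero 1)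
    exact h.deriv
  have hvu : deriv (fun x : ℝ => deriv (fun y : ℝ => (1/2)*x^2 + (1/2)*R*y^2 - R*x*y*s
      + (1/2)*χ^2*v₁^2 + R*κ^2*(1-c)) u₂) v₂ = -(R*s) := by
    have he : (fun x : ℝ => deriv (fun y : ℝ => (1/2)*x^2 + (1/2)*R*y^2 - R*x*y*s
        + (1/2)*χ^2*v₁^2 + R*κ^2*(1-c)) u₂) = fun x => R*u₂ - R*x*s := funext fun a => hu2 a u₂
    rw [he]
    have h : HasDerivAt (fun x : ℝ => R*u₂ - R*x*s) (-(R*s)) v₂ := by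
      have := (hasDerivAt_const v₂ (R*u₂)).sub (((hasDerivAt_id v₂).const_mul R).mul_const s)
      refine this.congr_deriv ?_
      ring
    exact h.deriv
  have huu : deriv (fun x : ℝ => deriv (fun y : ℝ => (1/2)*v₂^2 + (1/2)*R*y^2 - R*v₂*y*s
      + (1/2)*χ^2*v₁^2 + R*κ^2*(1-c)) x) u₂ = R := by
    have he : (fun x : ℝ => deriv (fun y : ℝ => (1/2)*v₂^2 + (1/2)*R*y^2 - R*v₂*y*s
        + (1/2)*χ^2*v₁^2 + R*κ^2*(1-c)) x) = fun x => R*x - R*v₂*s := funext fun b => hu2 v₂ b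
    rw [he]
    have h : HasDerivAt (fun x : ℝ => R*x - R*v₂*s) R u₂ := by
      have := (((hasDerivAt_id u₂).const_mul R).sub (hasDerivAt_const u₂ (R*v₂*s)))
      refine this.congr_deriv ?_
      ring
    exact h.deriv
  simp only [genL]
  rw [hv1, hv2 v₂, hu1, hu2 v₂ u₂, hvv, hvu, huu]
  have hD2 : (2 : ℝ) * (1 - R * s ^ 2) ≠ 0 := by
    intro h; apply hD; linarith [mul_eq_zero.mp h]
  simp only [← hs, ← hc]
  field_simp
  ring
end

section
/- Let ζ₁, ζ₂, χ, κ, ν be real numbers and 0 < R < 1. Then for all (v₁,v₂,u₁,u₂) ∈ ℝ⁴, ℒ(v₁(v₂ − R u₂ sin u₁)) = v₂² − R v₂ u₂ sin u₁ − 2ζ₁ v₁ v₂ − χ² v₁². -/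
/-- `ℒ(v₁(v₂ − R u₂ sin u₁)) = v₂² − R v₂ u₂ sin u₁ − 2ζ₁ v₁ v₂ − χ² v₁²`. -/
theorem genL_cross (ζ₁ ζ₂ χ κ ν R : ℝ) (hR0 : 0 < R) (hR1 : R < 1) :
    ∀ v₁ v₂ u₁ u₂ : ℝ,
      genL ζ₁ ζ₂ χ κ ν R
        (fun v₁ v₂ u₁ u₂ => v₁ * (v₂ - R * u₂ * Real.sin u₁)) v₁ v₂ u₁ u₂
      = v₂ ^ 2 - R * v₂ * u₂ * Real.sin u₁ - 2 * ζ₁ * v₁ * v₂ - χ ^ 2 * v₁ ^ 2 := by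
  intro v₁ v₂ u₁ u₂
  have hd : (1 : ℝ) - R * Real.sin u₁ ^ 2 ≠ 0 := by
    have hs : Real.sin u₁ ^ 2 ≤ 1 := by
      have := Real.sin_sq_le_one u₁; linarith
    nlinarith [sq_nonneg (Real.sin u₁)]
  have h1 : deriv (fun x => x * (v₂ - R * u₂ * Real.sin u₁)) v₁
      = v₂ - R * u₂ * Real.sin u₁ := by
    simpa using (hasDerivAt_id v₁).mul_const (v₂ - R * u₂ * Real.sin u₁) |>.deriv
  have h2 : ∀ z : ℝ, deriv (fun x => v₁ * (x - R * u₂ * Real.sin u₁)) z = v₁ := by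
    intro z
    simpa using (((hasDerivAt_id z).sub_const (R * u₂ * Real.sin u₁)).const_mul v₁).deriv
  have h3 : deriv (fun x => v₁ * (v₂ - R * u₂ * Real.sin x)) u₁
      = v₁ * (-(R * u₂ * Real.cos u₁)) := by
    have : HasDerivAt (fun x => v₁ * (v₂ - R * u₂ * Real.sin x))
        (v₁ * (-(R * u₂ * Real.cos u₁))) u₁ := by
      have hsin : HasDerivAt (fun x => R * u₂ * Real.sin x) (R * u₂ * Real.cos u₁) u₁ :=
        (Real.hasDerivAt_sin u₁).const_mul (R * u₂)
      simpa using (hsin.const_sub v₂).const_mul v₁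
    exact this.deriv
  have h4 : ∀ z : ℝ, deriv (fun x => v₁ * (v₂ - R * x * Real.sin u₁)) z
      = v₁ * (-(R * Real.sin u₁)) := by
    intro z
    have : HasDerivAt (fun x => v₁ * (v₂ - R * x * Real.sin u₁))
        (v₁ * (-(R * Real.sin u₁))) z := by
      have hx : HasDerivAt (fun x : ℝ => R * x * Real.sin u₁) (R * Real.sin u₁) z := by
        simpa [mul_assoc, mul_comm, mul_left_comm] using
          ((hasDerivAt_id z).const_mul R).mul_const (Real.sin u₁)
      simpa using (hx.const_sub v₂).const_mul v₁
    exact this.deriv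
  have h22 : deriv (fun x => deriv (fun y => v₁ * (y - R * u₂ * Real.sin u₁)) x) v₂ = 0 := by
    have : (fun x => deriv (fun y => v₁ * (y - R * u₂ * Real.sin u₁)) x) = fun _ => v₁ := by
      funext x; exact h2 x
    rw [this]; simp
  have h24 : deriv (fun x => deriv (fun y => v₁ * (x - R * y * Real.sin u₁)) u₂) v₂ = 0 := by
    have : (fun x => deriv (fun y => v₁ * (x - R * y * Real.sin u₁)) u₂)
        = fun _ => v₁ * (-(R * Real.sin u₁)) := by
      funext x
      have : HasDerivAt (fun y => v₁ * (x - R * y * Real.sin u₁))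
          (v₁ * (-(R * Real.sin u₁))) u₂ := by
        have hx : HasDerivAt (fun y : ℝ => R * y * Real.sin u₁) (R * Real.sin u₁) u₂ := by
          simpa [mul_assoc, mul_comm, mul_left_comm] using
            ((hasDerivAt_id u₂).const_mul R).mul_const (Real.sin u₁)
        simpa using (hx.const_sub x).const_mul v₁
      exact this.deriv
    rw [this]; simp
  have h44 : deriv (fun x => deriv (fun y => v₁ * (v₂ - R * y * Real.sin u₁)) x) u₂ = 0 := by
    have : (fun x => deriv (fun y => v₁ * (v₂ - R * y * Real.sin u₁)) x)
        = fun _ => v₁ * (-(R * Real.sin u₁)) := by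
      funext x; exact h4 x
    rw [this]; simp
  simp only [genL, h1, h2, h3, h4, h22, h24, h44, deriv_const]
  field_simp
  ring
end

section
/- Let ζ₁ > 0, ζ₂ > 0, χ > 0, κ > 0, ν > 0 and 0 < R < 1. There exist α > 0 and positive constants c₁, c₂, c₃, c₄, c₅ such that the function F(v₁,v₂,u₁,u₂) = E(v₁,v₂,u₁,u₂) + α·v₁(v₂ − R u₂ sin u₁) satisfies, for all (v₁,v₂,u₁,u₂) ∈ ℝ⁴: (a) c₁(v₁² + v₂² + u₂²) ≤ F(v₁,v₂,u₁,u₂) ≤ c₂ + c₃(v₁² + v₂² + u₂²), and (b) ℒF(v₁,v₂,u₁,u₂) ≤ c₄ − c₅(v₁² + v₂² + u₂²). -/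
lemma deriv_quad (a b c x : ℝ) : deriv (fun x => a*x^2 + b*x + c) x = 2*a*x + b := by
  have h : HasDerivAt (fun x : ℝ => a*x^2 + b*x + c) (2*a*x + b) x := by
    have h1 : HasDerivAt (fun x : ℝ => x^2) (2*x) x := by
      simpa using hasDerivAt_pow 2 x
    have := ((h1.const_mul a).add ((hasDerivAt_id x).const_mul b)).add_const c
    exact this.congr_deriv (by ring)
  exact h.deriv

lemma deriv_affine (a b x : ℝ) : deriv (fun x => a*x + b) x = a := by
  have h : HasDerivAt (fun x : ℝ => a*x + b) a x := by
    simpa using ((hasDerivAt_id x).const_mul a).add_const b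
  exact h.deriv

lemma deriv_sincos (a b d x : ℝ) :
    deriv (fun x => a*Real.sin x + b*Real.cos x + d) x = a*Real.cos x - b*Real.sin x := by
  have h : HasDerivAt (fun x : ℝ => a*Real.sin x + b*Real.cos x + d)
      (a*Real.cos x - b*Real.sin x) x := by
    have := (((Real.hasDerivAt_sin x).const_mul a).add
      ((Real.hasDerivAt_cos x).const_mul b)).add_const d
    exact this.congr_deriv (by ring)
  exact h.deriv

lemma genL_closed (ζ₁ ζ₂ χ κ ν R α : ℝ) (hR0 : 0 < R) (hR1 : R < 1)
    (v₁ v₂ u₁ u₂ : ℝ) :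
    genL ζ₁ ζ₂ χ κ ν R
      (fun v₁ v₂ u₁ u₂ =>
        ((1 / 2) * v₂ ^ 2 + (1 / 2) * R * u₂ ^ 2 - R * v₂ * u₂ * Real.sin u₁
            + (1 / 2) * χ ^ 2 * v₁ ^ 2 + R * κ ^ 2 * (1 - Real.cos u₁))
          + α * (v₁ * (v₂ - R * u₂ * Real.sin u₁)))
      v₁ v₂ u₁ u₂
    = -(2*ζ₁)*v₂^2 - 2*R*ζ₂*u₂^2 + ν^2/(2*(1 - R*Real.sin u₁^2))
        + α*(v₂^2 - R*v₂*u₂*Real.sin u₁ - 2*ζ₁*v₁*v₂ - χ^2*v₁^2) := by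
  have hs2 : Real.sin u₁^2 ≤ 1 := by
    nlinarith [Real.sin_le_one u₁, Real.neg_one_le_sin u₁]
  have hD : (1 : ℝ) - R*Real.sin u₁^2 ≠ 0 := by nlinarith
  simp only [genL]
  -- mixed second derivative term first
  rw [show (fun x : ℝ => deriv (fun y : ℝ => (1 / 2 * x ^ 2 + 1 / 2 * R * y ^ 2
        - R * x * y * Real.sin u₁ + 1 / 2 * χ ^ 2 * v₁ ^ 2 + R * κ ^ 2 * (1 - Real.cos u₁))
        + α * (v₁ * (x - R * y * Real.sin u₁))) u₂)
      = (fun x : ℝ => (-(R*Real.sin u₁))*x + (R*u₂ - α*(v₁*(R*Real.sin u₁))))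
      from funext fun x => by
        rw [show (fun y : ℝ => (1 / 2 * x ^ 2 + 1 / 2 * R * y ^ 2 - R * x * y * Real.sin u₁
            + 1 / 2 * χ ^ 2 * v₁ ^ 2 + R * κ ^ 2 * (1 - Real.cos u₁))
            + α * (v₁ * (x - R * y * Real.sin u₁)))
          = (fun y : ℝ => ((1/2)*R)*y^2 + (-(R*x*Real.sin u₁) - α*(v₁*(R*Real.sin u₁)))*y
              + (1/2*x^2 + 1/2*χ^2*v₁^2 + R*κ^2*(1-Real.cos u₁) + α*(v₁*x)))
          from funext fun y => by ring, deriv_quad]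
        ring]
  -- canonical forms of the four single-variable slices
  rw [show (fun x : ℝ => (1 / 2 * v₂ ^ 2 + 1 / 2 * R * u₂ ^ 2 - R * v₂ * u₂ * Real.sin u₁
        + 1 / 2 * χ ^ 2 * x ^ 2 + R * κ ^ 2 * (1 - Real.cos u₁)) + α * (x * (v₂ - R * u₂ * Real.sin u₁)))
      = (fun x : ℝ => ((1/2)*χ^2)*x^2 + (α*(v₂ - R*u₂*Real.sin u₁))*x
          + (1/2*v₂^2 + 1/2*R*u₂^2 - R*v₂*u₂*Real.sin u₁ + R*κ^2*(1-Real.cos u₁)))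
      from funext fun x => by ring]
  rw [show (fun x : ℝ => (1 / 2 * x ^ 2 + 1 / 2 * R * u₂ ^ 2 - R * x * u₂ * Real.sin u₁
        + 1 / 2 * χ ^ 2 * v₁ ^ 2 + R * κ ^ 2 * (1 - Real.cos u₁)) + α * (v₁ * (x - R * u₂ * Real.sin u₁)))
      = (fun x : ℝ => ((1:ℝ)/2)*x^2 + (-(R*u₂*Real.sin u₁) + α*v₁)*x
          + (1/2*R*u₂^2 + 1/2*χ^2*v₁^2 + R*κ^2*(1-Real.cos u₁) - α*(v₁*(R*u₂*Real.sin u₁))))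
      from funext fun x => by ring]
  rw [show (fun x : ℝ => (1 / 2 * v₂ ^ 2 + 1 / 2 * R * u₂ ^ 2 - R * v₂ * u₂ * Real.sin x
        + 1 / 2 * χ ^ 2 * v₁ ^ 2 + R * κ ^ 2 * (1 - Real.cos x)) + α * (v₁ * (v₂ - R * u₂ * Real.sin x)))
      = (fun x : ℝ => (-(R*v₂*u₂) - α*(v₁*(R*u₂)))*Real.sin x + (-(R*κ^2))*Real.cos x
          + (1/2*v₂^2 + 1/2*R*u₂^2 + 1/2*χ^2*v₁^2 + R*κ^2 + α*(v₁*v₂)))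
      from funext fun x => by ring]
  rw [show (fun x : ℝ => (1 / 2 * v₂ ^ 2 + 1 / 2 * R * x ^ 2 - R * v₂ * x * Real.sin u₁
        + 1 / 2 * χ ^ 2 * v₁ ^ 2 + R * κ ^ 2 * (1 - Real.cos u₁)) + α * (v₁ * (v₂ - R * x * Real.sin u₁)))
      = (fun x : ℝ => ((1/2)*R)*x^2 + (-(R*v₂*Real.sin u₁) - α*(v₁*(R*Real.sin u₁)))*x
          + (1/2*v₂^2 + 1/2*χ^2*v₁^2 + R*κ^2*(1-Real.cos u₁) + α*(v₁*v₂)))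
      from funext fun x => by ring]
  simp only [deriv_quad, deriv_sincos, deriv_affine]
  field_simp
  ring

set_option maxHeartbeats 2000000 in
/-- Lyapunov function estimates: there exist  and positive constants
 such that  satisfies
 and . -/
theorem lyapunov_estimates (ζ₁ ζ₂ χ κ ν R : ℝ)
    (hζ₁ : 0 < ζ₁) (hζ₂ : 0 < ζ₂) (hχ : 0 < χ) (hκ : 0 < κ) (hν : 0 < ν)
    (hR0 : 0 < R) (hR1 : R < 1) :
    ∃ α c₁ c₂ c₃ c₄ c₅ : ℝ, 0 < α ∧ 0 < c₁ ∧ 0 < c₂ ∧ 0 < c₃ ∧ 0 < c₄ ∧ 0 < c₅ ∧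
      ∀ v₁ v₂ u₁ u₂ : ℝ,
        (c₁ * (v₁ ^ 2 + v₂ ^ 2 + u₂ ^ 2)
            ≤ ((1 / 2) * v₂ ^ 2 + (1 / 2) * R * u₂ ^ 2 - R * v₂ * u₂ * Real.sin u₁
                + (1 / 2) * χ ^ 2 * v₁ ^ 2 + R * κ ^ 2 * (1 - Real.cos u₁))
              + α * (v₁ * (v₂ - R * u₂ * Real.sin u₁))
          ∧ ((1 / 2) * v₂ ^ 2 + (1 / 2) * R * u₂ ^ 2 - R * v₂ * u₂ * Real.sin u₁
                + (1 / 2) * χ ^ 2 * v₁ ^ 2 + R * κ ^ 2 * (1 - Real.cos u₁))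
              + α * (v₁ * (v₂ - R * u₂ * Real.sin u₁))
            ≤ c₂ + c₃ * (v₁ ^ 2 + v₂ ^ 2 + u₂ ^ 2))
        ∧ genL ζ₁ ζ₂ χ κ ν R
            (fun v₁ v₂ u₁ u₂ =>
              ((1 / 2) * v₂ ^ 2 + (1 / 2) * R * u₂ ^ 2 - R * v₂ * u₂ * Real.sin u₁
                  + (1 / 2) * χ ^ 2 * v₁ ^ 2 + R * κ ^ 2 * (1 - Real.cos u₁))
                + α * (v₁ * (v₂ - R * u₂ * Real.sin u₁)))
            v₁ v₂ u₁ u₂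
          ≤ c₄ - c₅ * (v₁ ^ 2 + v₂ ^ 2 + u₂ ^ 2) := by
  have hχ2 : (0:ℝ) < χ^2 := by positivity
  obtain ⟨α, hα, hα1, hα2, hα3, hα4, hα5⟩ :
      ∃ α : ℝ, 0 < α ∧ 4*α ≤ χ^2 ∧ 4*α ≤ 1-R ∧ 2*α*(1+R) ≤ R*(1-R) ∧
        α*(3*χ^2+4*ζ₁^2) ≤ 2*ζ₁*χ^2 ∧ α ≤ 2*R*ζ₂ := by
    refine ⟨min (χ^2/4) (min ((1-R)/4) (min (R*(1-R)/(2*(1+R)))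
      (min (2*ζ₁*χ^2/(3*χ^2+4*ζ₁^2)) (2*R*ζ₂)))), ?_, ?_, ?_, ?_, ?_, ?_⟩
    · apply lt_min (by nlinarith)
      apply lt_min (by nlinarith)
      apply lt_min (div_pos (by nlinarith) (by nlinarith))
      exact lt_min (div_pos (by nlinarith) (by nlinarith)) (by nlinarith)
    · have h := min_le_left (χ^2/4) (min ((1-R)/4) (min (R*(1-R)/(2*(1+R)))
        (min (2*ζ₁*χ^2/(3*χ^2+4*ζ₁^2)) (2*R*ζ₂))))
      linarith
    · have h := (min_le_right (χ^2/4) _).trans (min_le_left ((1-R)/4)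
        (min (R*(1-R)/(2*(1+R))) (min (2*ζ₁*χ^2/(3*χ^2+4*ζ₁^2)) (2*R*ζ₂))))
      linarith
    · have h := (min_le_right (χ^2/4) _).trans ((min_le_right ((1-R)/4) _).trans
        (min_le_left (R*(1-R)/(2*(1+R))) (min (2*ζ₁*χ^2/(3*χ^2+4*ζ₁^2)) (2*R*ζ₂))))
      rw [le_div_iff₀ (by nlinarith)] at h
      linarith
    · have h := (min_le_right (χ^2/4) _).trans ((min_le_right ((1-R)/4) _).trans
        ((min_le_right (R*(1-R)/(2*(1+R))) _).trans
          (min_le_left (2*ζ₁*χ^2/(3*χ^2+4*ζ₁^2)) (2*R*ζ₂))))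
      rw [le_div_iff₀ (by nlinarith)] at h
      linarith
    · exact (min_le_right (χ^2/4) _).trans ((min_le_right ((1-R)/4) _).trans
        ((min_le_right (R*(1-R)/(2*(1+R))) _).trans
          (min_le_right (2*ζ₁*χ^2/(3*χ^2+4*ζ₁^2)) (2*R*ζ₂))))
  obtain ⟨c₁, hc₁, hc1a, hc1b, hc1c⟩ :
      ∃ c₁ : ℝ, 0 < c₁ ∧ 4*c₁ ≤ χ^2 ∧ 8*c₁ ≤ 1-R ∧ 4*c₁*(1+R) ≤ R*(1-R) := by
    refine ⟨min (χ^2/4) (min ((1-R)/8) (R*(1-R)/(4*(1+R)))), ?_, ?_, ?_, ?_⟩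
    · exact lt_min (by nlinarith) (lt_min (by nlinarith)
        (div_pos (by nlinarith) (by nlinarith)))
    · have h := min_le_left (χ^2/4) (min ((1-R)/8) (R*(1-R)/(4*(1+R))))
      linarith
    · have h := (min_le_right (χ^2/4) _).trans
        (min_le_left ((1-R)/8) (R*(1-R)/(4*(1+R))))
      linarith
    · have h := (min_le_right (χ^2/4) _).trans
        (min_le_right ((1-R)/8) (R*(1-R)/(4*(1+R))))
      rw [le_div_iff₀ (by nlinarith)] at h
      linarith
  obtain ⟨c₅, hc₅, hc5a, hc5b, hc5c⟩ :
      ∃ c₅ : ℝ, 0 < c₅ ∧ 2*c₅ ≤ α*χ^2 ∧ c₅ ≤ ζ₁ ∧ c₅ ≤ R*ζ₂ := by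
    refine ⟨min (α*χ^2/2) (min ζ₁ (R*ζ₂)), ?_, ?_, ?_, ?_⟩
    · exact lt_min (div_pos (by nlinarith) (by norm_num)) (lt_min hζ₁ (by nlinarith))
    · have h := min_le_left (α*χ^2/2) (min ζ₁ (R*ζ₂))
      linarith
    · exact (min_le_right (α*χ^2/2) _).trans (min_le_left ζ₁ (R*ζ₂))
    · exact (min_le_right (α*χ^2/2) _).trans (min_le_right ζ₁ (R*ζ₂))
  refine ⟨α, c₁, 2*R*κ^2, 1 + χ^2 + α, ν^2/(2*(1-R)), c₅, hα, hc₁,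
    mul_pos (by linarith) (pow_pos hκ 2), by positivity,
    div_pos (pow_pos hν 2) (by linarith), hc₅, ?_⟩
  intro v₁ v₂ u₁ u₂
  have hs1 : Real.sin u₁ ≤ 1 := Real.sin_le_one u₁
  have hs1' : -1 ≤ Real.sin u₁ := Real.neg_one_le_sin u₁
  have hcos1 : Real.cos u₁ ≤ 1 := Real.cos_le_one u₁
  have hcos1' : -1 ≤ Real.cos u₁ := Real.neg_one_le_cos u₁
  set s := Real.sin u₁ with hsdef
  set c := Real.cos u₁ with hcdef
  have hs2 : s^2 ≤ 1 := by nlinarith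
  have hRs1 : R*s ≤ 1 := by nlinarith
  have hRs2 : -1 ≤ R*s := by nlinarith
  have hD : 0 < 1 - R*s^2 := by nlinarith
  refine ⟨⟨?_, ?_⟩, ?_⟩
  · -- lower bound
    have C0 : (0:ℝ) ≤ 4*(1+R)*(R*κ^2*(1-c)) :=
      mul_nonneg (by nlinarith) (mul_nonneg (by nlinarith [sq_nonneg κ]) (by linarith))
    have C1 : (0:ℝ) ≤ 2*(1+R)*α*((v₁+v₂)^2) :=
      mul_nonneg (by nlinarith) (sq_nonneg _)
    have C2 : (0:ℝ) ≤ (1+R)*α*((1-R*s)*(v₁+u₂)^2) :=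
      mul_nonneg (by nlinarith) (mul_nonneg (by linarith) (sq_nonneg _))
    have C2' : (0:ℝ) ≤ (1+R)*α*((1+R*s)*(v₁-u₂)^2) :=
      mul_nonneg (by nlinarith) (mul_nonneg (by linarith) (sq_nonneg _))
    have C3 : (0:ℝ) ≤ (1-s)*((1+R)*v₂+2*R*u₂)^2 :=
      mul_nonneg (by linarith) (sq_nonneg _)
    have C3' : (0:ℝ) ≤ (1+s)*((1+R)*v₂-2*R*u₂)^2 :=
      mul_nonneg (by linarith) (sq_nonneg _)
    have C4 : (0:ℝ) ≤ 2*(1+R)*((χ^2-2*α-2*c₁)*v₁^2) :=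
      mul_nonneg (by nlinarith) (mul_nonneg (by linarith) (sq_nonneg _))
    have C5 : (0:ℝ) ≤ (1+R)*((1-R-2*α-4*c₁)*v₂^2) :=
      mul_nonneg (by nlinarith) (mul_nonneg (by linarith) (sq_nonneg _))
    have C6 : (0:ℝ) ≤ (2*R*(1-R) - 2*(1+R)*α - 4*(1+R)*c₁)*u₂^2 :=
      mul_nonneg (by linarith) (sq_nonneg _)
    have X : (0:ℝ) ≤ 4*(1+R)*((((1 / 2) * v₂ ^ 2 + (1 / 2) * R * u₂ ^ 2 - R * v₂ * u₂ * s
          + (1 / 2) * χ ^ 2 * v₁ ^ 2 + R * κ ^ 2 * (1 - c))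
          + α * (v₁ * (v₂ - R * u₂ * s))) - c₁ * (v₁ ^ 2 + v₂ ^ 2 + u₂ ^ 2)) := by
      linarith [C0, C1, C2, C2', C3, C3', C4, C5, C6]
    have h4 : (0:ℝ) < 4*(1+R) := by linarith
    refine le_of_mul_le_mul_left ?_ h4
    linarith [X]
  · -- upper bound
    have D0 : (0:ℝ) ≤ R*κ^2*(1+c) :=
      mul_nonneg (by nlinarith [sq_nonneg κ]) (by linarith)
    have D1 : (0:ℝ) ≤ α*(v₁-v₂)^2 := mul_nonneg hα.le (sq_nonneg _)
    have D2 : (0:ℝ) ≤ α*((1-R*s)*(v₁-u₂)^2) :=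
      mul_nonneg hα.le (mul_nonneg (by linarith) (sq_nonneg _))
    have D2' : (0:ℝ) ≤ α*((1+R*s)*(v₁+u₂)^2) :=
      mul_nonneg hα.le (mul_nonneg (by linarith) (sq_nonneg _))
    have D3 : (0:ℝ) ≤ (1-R*s)*(v₂-u₂)^2 :=
      mul_nonneg (by linarith) (sq_nonneg _)
    have D3' : (0:ℝ) ≤ (1+R*s)*(v₂+u₂)^2 :=
      mul_nonneg (by linarith) (sq_nonneg _)
    have E1 : (0:ℝ) ≤ χ^2*v₁^2 := by positivity
    have E2 : (0:ℝ) ≤ χ^2*v₂^2 := by positivity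
    have E3 : (0:ℝ) ≤ χ^2*u₂^2 := by positivity
    have E4 : (0:ℝ) ≤ α*v₂^2 := mul_nonneg hα.le (sq_nonneg _)
    have E5 : (0:ℝ) ≤ α*u₂^2 := mul_nonneg hα.le (sq_nonneg _)
    have E6 : (0:ℝ) ≤ (1-R)*u₂^2 := mul_nonneg (by linarith) (sq_nonneg _)
    linarith [D0, D1, D2, D2', D3, D3', E1, E2, E3, E4, E5, E6, sq_nonneg v₁]
  · -- generator bound
    rw [genL_closed ζ₁ ζ₂ χ κ ν R α hR0 hR1 v₁ v₂ u₁ u₂, ← hsdef]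
    have hnu : ν^2/(2*(1 - R*s^2)) ≤ ν^2/(2*(1-R)) := by
      apply div_le_div_of_nonneg_left (by positivity) (by nlinarith) (by nlinarith)
    have W1 : (0:ℝ) ≤ χ^2*(α*((1+R*s)*(v₂+u₂)^2)) :=
      mul_nonneg (sq_nonneg χ) (mul_nonneg hα.le (mul_nonneg (by linarith) (sq_nonneg _)))
    have W1' : (0:ℝ) ≤ χ^2*(α*((1-R*s)*(v₂-u₂)^2)) :=
      mul_nonneg (sq_nonneg χ) (mul_nonneg hα.le (mul_nonneg (by linarith) (sq_nonneg _)))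
    have W2 : (0:ℝ) ≤ α*(χ^2*v₁+2*ζ₁*v₂)^2 := mul_nonneg hα.le (sq_nonneg _)
    have W3 : (0:ℝ) ≤ χ^2*((α*χ^2-2*c₅)*v₁^2) :=
      mul_nonneg (sq_nonneg χ) (mul_nonneg (by linarith) (sq_nonneg _))
    have W4 : (0:ℝ) ≤ (4*ζ₁*χ^2 - 3*α*χ^2 - 4*α*ζ₁^2 - 2*χ^2*c₅)*v₂^2 := by
      apply mul_nonneg _ (sq_nonneg _)
      nlinarith [hα4, hc5b, hχ2]
    have W5 : (0:ℝ) ≤ χ^2*((4*R*ζ₂ - 2*c₅ - α)*u₂^2) :=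
      mul_nonneg (sq_nonneg χ) (mul_nonneg (by linarith) (sq_nonneg _))
    have Y : (0:ℝ) ≤ 2*χ^2*(2*ζ₁*v₂^2 + 2*R*ζ₂*u₂^2
        - α*(v₂^2 - R*v₂*u₂*s - 2*ζ₁*v₁*v₂ - χ^2*v₁^2)
        - c₅*(v₁^2+v₂^2+u₂^2)) := by
      linarith [W1, W1', W2, W3, W4, W5]
    have key : c₅*(v₁^2+v₂^2+u₂^2) ≤ 2*ζ₁*v₂^2 + 2*R*ζ₂*u₂^2
        - α*(v₂^2 - R*v₂*u₂*s - 2*ζ₁*v₁*v₂ - χ^2*v₁^2) := by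
      have h2 : (0:ℝ) < 2*χ^2 := by linarith
      refine le_of_mul_le_mul_left ?_ h2
      linarith [Y]
    linarith [hnu, key]
end

section
/- Let ζ₁ > 0, ζ₂ > 0, χ > 0, κ > 0, ν > 0 and 0 < R < 1. There exist α > 0 and β₀ > 0 such that the function F(v₁,v₂,u₁,u₂) = E(v₁,v₂,u₁,u₂) + α·v₁(v₂ − R u₂ sin u₁) satisfies: for every γ > 0 there exists a constant c₆ such that ℒ(exp(β₀ F))(v₁,v₂,u₁,u₂) ≤ −γ exp(β₀ F(v₁,v₂,u₁,u₂)) + c₆ for all (v₁,v₂,u₁,u₂) ∈ ℝ⁴. -/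
private lemma hd_quad (a b c x : ℝ) :
    HasDerivAt (fun t : ℝ => a * t ^ 2 + b * t + c) (2 * a * x + b) x := by
  have h := (((hasDerivAt_pow 2 x).const_mul a).fun_add ((hasDerivAt_id x).const_mul b)).add_const c
  refine h.congr_deriv ?_
  push_cast
  ring

private lemma deriv_expquad (a b c x : ℝ) :
    deriv (fun t : ℝ => Real.exp (a * t ^ 2 + b * t + c)) x
      = (2 * a * x + b) * Real.exp (a * x ^ 2 + b * x + c) := by
  have h := (hd_quad a b c x).exp
  rw [h.deriv]
  ring

private lemma deriv_exptrig (a b c x : ℝ) :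
    deriv (fun t : ℝ => Real.exp (a * Real.sin t + b * Real.cos t + c)) x
      = (a * Real.cos x - b * Real.sin x) * Real.exp (a * Real.sin x + b * Real.cos x + c) := by
  have h : HasDerivAt (fun t : ℝ => a * Real.sin t + b * Real.cos t + c)
      (a * Real.cos x - b * Real.sin x) x := by
    have := (((Real.hasDerivAt_sin x).const_mul a).fun_add ((Real.hasDerivAt_cos x).const_mul b)).add_const c
    refine this.congr_deriv ?_
    ring
  rw [h.exp.deriv]
  ring

private lemma deriv_linexp (p q a b c x : ℝ) :
    deriv (fun t : ℝ => (p * t + q) * Real.exp (a * t ^ 2 + b * t + c)) x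
      = (p + (p * x + q) * (2 * a * x + b)) * Real.exp (a * x ^ 2 + b * x + c) := by
  have h1 : HasDerivAt (fun t : ℝ => p * t + q) p x := by
    have := ((hasDerivAt_id x).const_mul p).add_const q
    refine this.congr_deriv ?_
    ring
  have h2 := (hd_quad a b c x).exp
  rw [(h1.fun_mul h2).deriv]
  ring

private lemma genL_exp (ζ₁ ζ₂ χ κ ν R α β : ℝ) (v₁ v₂ u₁ u₂ : ℝ)
    (hD : (1 : ℝ) - R * Real.sin u₁ ^ 2 ≠ 0) :
    genL ζ₁ ζ₂ χ κ ν R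
      (fun v₁ v₂ u₁ u₂ => Real.exp (β * (((1 / 2) * v₂ ^ 2 + (1 / 2) * R * u₂ ^ 2 - R * v₂ * u₂ * Real.sin u₁ + (1 / 2) * χ ^ 2 * v₁ ^ 2 + R * κ ^ 2 * (1 - Real.cos u₁)) + α * (v₁ * (v₂ - R * u₂ * Real.sin u₁))))) v₁ v₂ u₁ u₂
    = β * Real.exp (β * (((1 / 2) * v₂ ^ 2 + (1 / 2) * R * u₂ ^ 2 - R * v₂ * u₂ * Real.sin u₁ + (1 / 2) * χ ^ 2 * v₁ ^ 2 + R * κ ^ 2 * (1 - Real.cos u₁)) + α * (v₁ * (v₂ - R * u₂ * Real.sin u₁))))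
      * (-(2 * ζ₁ * v₂ ^ 2) - 2 * R * ζ₂ * u₂ ^ 2
          + α * (v₂ ^ 2 - R * v₂ * u₂ * Real.sin u₁ - 2 * ζ₁ * v₁ * v₂ - χ ^ 2 * v₁ ^ 2)
          + ν ^ 2 / (2 * (1 - R * Real.sin u₁ ^ 2))
          + β * ν ^ 2 * (v₂ + α * v₁) ^ 2 / 2) := by
  have e1 : deriv (fun x => Real.exp (β * (((1 / 2) * v₂ ^ 2 + (1 / 2) * R * u₂ ^ 2 - R * v₂ * u₂ * Real.sin u₁ + (1 / 2) * χ ^ 2 * x ^ 2 + R * κ ^ 2 * (1 - Real.cos u₁)) + α * (x * (v₂ - R * u₂ * Real.sin u₁))))) v₁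
      = β * (χ ^ 2 * v₁ + α * (v₂ - R * u₂ * Real.sin u₁)) * Real.exp (β * (((1 / 2) * v₂ ^ 2 + (1 / 2) * R * u₂ ^ 2 - R * v₂ * u₂ * Real.sin u₁ + (1 / 2) * χ ^ 2 * v₁ ^ 2 + R * κ ^ 2 * (1 - Real.cos u₁)) + α * (v₁ * (v₂ - R * u₂ * Real.sin u₁)))) := by
    have hfun : (fun x => Real.exp (β * (((1 / 2) * v₂ ^ 2 + (1 / 2) * R * u₂ ^ 2 - R * v₂ * u₂ * Real.sin u₁ + (1 / 2) * χ ^ 2 * x ^ 2 + R * κ ^ 2 * (1 - Real.cos u₁)) + α * (x * (v₂ - R * u₂ * Real.sin u₁)))))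
        = fun t => Real.exp ((β * (χ ^ 2 / 2)) * t ^ 2 + (β * (α * (v₂ - R * u₂ * Real.sin u₁))) * t
            + β * ((1 / 2) * v₂ ^ 2 + (1 / 2) * R * u₂ ^ 2 - R * v₂ * u₂ * Real.sin u₁ + R * κ ^ 2 * (1 - Real.cos u₁))) :=
      funext fun t => congrArg Real.exp (by ring)
    rw [hfun, deriv_expquad,
      show (β * (χ ^ 2 / 2)) * v₁ ^ 2 + (β * (α * (v₂ - R * u₂ * Real.sin u₁))) * v₁
            + β * ((1 / 2) * v₂ ^ 2 + (1 / 2) * R * u₂ ^ 2 - R * v₂ * u₂ * Real.sin u₁ + R * κ ^ 2 * (1 - Real.cos u₁))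
          = β * (((1 / 2) * v₂ ^ 2 + (1 / 2) * R * u₂ ^ 2 - R * v₂ * u₂ * Real.sin u₁ + (1 / 2) * χ ^ 2 * v₁ ^ 2 + R * κ ^ 2 * (1 - Real.cos u₁)) + α * (v₁ * (v₂ - R * u₂ * Real.sin u₁))) from by ring]
    ring
  have e2 : ∀ x : ℝ, deriv (fun t => Real.exp (β * (((1 / 2) * t ^ 2 + (1 / 2) * R * u₂ ^ 2 - R * t * u₂ * Real.sin u₁ + (1 / 2) * χ ^ 2 * v₁ ^ 2 + R * κ ^ 2 * (1 - Real.cos u₁)) + α * (v₁ * (t - R * u₂ * Real.sin u₁))))) x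
      = β * (x - R * u₂ * Real.sin u₁ + α * v₁) * Real.exp (β * (((1 / 2) * x ^ 2 + (1 / 2) * R * u₂ ^ 2 - R * x * u₂ * Real.sin u₁ + (1 / 2) * χ ^ 2 * v₁ ^ 2 + R * κ ^ 2 * (1 - Real.cos u₁)) + α * (v₁ * (x - R * u₂ * Real.sin u₁)))) := by
    intro x
    have hfun : (fun t => Real.exp (β * (((1 / 2) * t ^ 2 + (1 / 2) * R * u₂ ^ 2 - R * t * u₂ * Real.sin u₁ + (1 / 2) * χ ^ 2 * v₁ ^ 2 + R * κ ^ 2 * (1 - Real.cos u₁)) + α * (v₁ * (t - R * u₂ * Real.sin u₁)))))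
        = fun t => Real.exp ((β * (1 / 2)) * t ^ 2 + (β * (α * v₁ - R * u₂ * Real.sin u₁)) * t
            + β * ((1 / 2) * R * u₂ ^ 2 + (1 / 2) * χ ^ 2 * v₁ ^ 2 + R * κ ^ 2 * (1 - Real.cos u₁) - α * (v₁ * (R * u₂ * Real.sin u₁)))) :=
      funext fun t => congrArg Real.exp (by ring)
    rw [hfun, deriv_expquad,
      show (β * (1 / 2)) * x ^ 2 + (β * (α * v₁ - R * u₂ * Real.sin u₁)) * x
            + β * ((1 / 2) * R * u₂ ^ 2 + (1 / 2) * χ ^ 2 * v₁ ^ 2 + R * κ ^ 2 * (1 - Real.cos u₁) - α * (v₁ * (R * u₂ * Real.sin u₁)))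
          = β * (((1 / 2) * x ^ 2 + (1 / 2) * R * u₂ ^ 2 - R * x * u₂ * Real.sin u₁ + (1 / 2) * χ ^ 2 * v₁ ^ 2 + R * κ ^ 2 * (1 - Real.cos u₁)) + α * (v₁ * (x - R * u₂ * Real.sin u₁))) from by ring]
    ring
  have e3 : deriv (fun x => Real.exp (β * (((1 / 2) * v₂ ^ 2 + (1 / 2) * R * u₂ ^ 2 - R * v₂ * u₂ * Real.sin x + (1 / 2) * χ ^ 2 * v₁ ^ 2 + R * κ ^ 2 * (1 - Real.cos x)) + α * (v₁ * (v₂ - R * u₂ * Real.sin x))))) u₁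
      = β * (-(R * v₂ * u₂ * Real.cos u₁) + R * κ ^ 2 * Real.sin u₁ - α * (R * v₁ * u₂ * Real.cos u₁)) * Real.exp (β * (((1 / 2) * v₂ ^ 2 + (1 / 2) * R * u₂ ^ 2 - R * v₂ * u₂ * Real.sin u₁ + (1 / 2) * χ ^ 2 * v₁ ^ 2 + R * κ ^ 2 * (1 - Real.cos u₁)) + α * (v₁ * (v₂ - R * u₂ * Real.sin u₁)))) := by
    have hfun : (fun x => Real.exp (β * (((1 / 2) * v₂ ^ 2 + (1 / 2) * R * u₂ ^ 2 - R * v₂ * u₂ * Real.sin x + (1 / 2) * χ ^ 2 * v₁ ^ 2 + R * κ ^ 2 * (1 - Real.cos x)) + α * (v₁ * (v₂ - R * u₂ * Real.sin x)))))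
        = fun t => Real.exp ((β * (-(R * v₂ * u₂) - α * (v₁ * (R * u₂)))) * Real.sin t
            + (-(β * (R * κ ^ 2))) * Real.cos t
            + β * ((1 / 2) * v₂ ^ 2 + (1 / 2) * R * u₂ ^ 2 + (1 / 2) * χ ^ 2 * v₁ ^ 2 + R * κ ^ 2
                + α * (v₁ * v₂))) :=
      funext fun t => congrArg Real.exp (by ring)
    rw [hfun, deriv_exptrig,
      show (β * (-(R * v₂ * u₂) - α * (v₁ * (R * u₂)))) * Real.sin u₁
            + (-(β * (R * κ ^ 2))) * Real.cos u₁
            + β * ((1 / 2) * v₂ ^ 2 + (1 / 2) * R * u₂ ^ 2 + (1 / 2) * χ ^ 2 * v₁ ^ 2 + R * κ ^ 2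
                + α * (v₁ * v₂))
          = β * (((1 / 2) * v₂ ^ 2 + (1 / 2) * R * u₂ ^ 2 - R * v₂ * u₂ * Real.sin u₁ + (1 / 2) * χ ^ 2 * v₁ ^ 2 + R * κ ^ 2 * (1 - Real.cos u₁)) + α * (v₁ * (v₂ - R * u₂ * Real.sin u₁))) from by ring]
    ring
  have e4 : ∀ w x : ℝ, deriv (fun t => Real.exp (β * (((1 / 2) * w ^ 2 + (1 / 2) * R * t ^ 2 - R * w * t * Real.sin u₁ + (1 / 2) * χ ^ 2 * v₁ ^ 2 + R * κ ^ 2 * (1 - Real.cos u₁)) + α * (v₁ * (w - R * t * Real.sin u₁))))) x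
      = β * (R * x - R * w * Real.sin u₁ - α * (v₁ * (R * Real.sin u₁))) * Real.exp (β * (((1 / 2) * w ^ 2 + (1 / 2) * R * x ^ 2 - R * w * x * Real.sin u₁ + (1 / 2) * χ ^ 2 * v₁ ^ 2 + R * κ ^ 2 * (1 - Real.cos u₁)) + α * (v₁ * (w - R * x * Real.sin u₁)))) := by
    intro w x
    have hfun : (fun t => Real.exp (β * (((1 / 2) * w ^ 2 + (1 / 2) * R * t ^ 2 - R * w * t * Real.sin u₁ + (1 / 2) * χ ^ 2 * v₁ ^ 2 + R * κ ^ 2 * (1 - Real.cos u₁)) + α * (v₁ * (w - R * t * Real.sin u₁)))))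
        = fun t => Real.exp ((β * (R / 2)) * t ^ 2 + (β * (-(R * w * Real.sin u₁) - α * (v₁ * (R * Real.sin u₁)))) * t
            + β * ((1 / 2) * w ^ 2 + (1 / 2) * χ ^ 2 * v₁ ^ 2 + R * κ ^ 2 * (1 - Real.cos u₁) + α * (v₁ * w))) :=
      funext fun t => congrArg Real.exp (by ring)
    rw [hfun, deriv_expquad,
      show (β * (R / 2)) * x ^ 2 + (β * (-(R * w * Real.sin u₁) - α * (v₁ * (R * Real.sin u₁)))) * x
            + β * ((1 / 2) * w ^ 2 + (1 / 2) * χ ^ 2 * v₁ ^ 2 + R * κ ^ 2 * (1 - Real.cos u₁) + α * (v₁ * w))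
          = β * (((1 / 2) * w ^ 2 + (1 / 2) * R * x ^ 2 - R * w * x * Real.sin u₁ + (1 / 2) * χ ^ 2 * v₁ ^ 2 + R * κ ^ 2 * (1 - Real.cos u₁)) + α * (v₁ * (w - R * x * Real.sin u₁))) from by ring]
    ring
  have e5 : deriv (fun x => deriv (fun y => Real.exp (β * (((1 / 2) * y ^ 2 + (1 / 2) * R * u₂ ^ 2 - R * y * u₂ * Real.sin u₁ + (1 / 2) * χ ^ 2 * v₁ ^ 2 + R * κ ^ 2 * (1 - Real.cos u₁)) + α * (v₁ * (y - R * u₂ * Real.sin u₁))))) x) v₂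
      = (β + (β * (v₂ - R * u₂ * Real.sin u₁ + α * v₁)) ^ 2) * Real.exp (β * (((1 / 2) * v₂ ^ 2 + (1 / 2) * R * u₂ ^ 2 - R * v₂ * u₂ * Real.sin u₁ + (1 / 2) * χ ^ 2 * v₁ ^ 2 + R * κ ^ 2 * (1 - Real.cos u₁)) + α * (v₁ * (v₂ - R * u₂ * Real.sin u₁)))) := by
    have hfun : (fun x => deriv (fun y => Real.exp (β * (((1 / 2) * y ^ 2 + (1 / 2) * R * u₂ ^ 2 - R * y * u₂ * Real.sin u₁ + (1 / 2) * χ ^ 2 * v₁ ^ 2 + R * κ ^ 2 * (1 - Real.cos u₁)) + α * (v₁ * (y - R * u₂ * Real.sin u₁))))) x)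
        = fun t => (β * t + β * (α * v₁ - R * u₂ * Real.sin u₁))
            * Real.exp ((β * (1 / 2)) * t ^ 2 + (β * (α * v₁ - R * u₂ * Real.sin u₁)) * t
                + β * ((1 / 2) * R * u₂ ^ 2 + (1 / 2) * χ ^ 2 * v₁ ^ 2 + R * κ ^ 2 * (1 - Real.cos u₁) - α * (v₁ * (R * u₂ * Real.sin u₁)))) := by
      funext t
      rw [e2 t, show β * (((1 / 2) * t ^ 2 + (1 / 2) * R * u₂ ^ 2 - R * t * u₂ * Real.sin u₁ + (1 / 2) * χ ^ 2 * v₁ ^ 2 + R * κ ^ 2 * (1 - Real.cos u₁)) + α * (v₁ * (t - R * u₂ * Real.sin u₁)))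
          = (β * (1 / 2)) * t ^ 2 + (β * (α * v₁ - R * u₂ * Real.sin u₁)) * t
            + β * ((1 / 2) * R * u₂ ^ 2 + (1 / 2) * χ ^ 2 * v₁ ^ 2 + R * κ ^ 2 * (1 - Real.cos u₁) - α * (v₁ * (R * u₂ * Real.sin u₁))) from by ring]
      ring
    rw [hfun, deriv_linexp,
      show (β * (1 / 2)) * v₂ ^ 2 + (β * (α * v₁ - R * u₂ * Real.sin u₁)) * v₂
            + β * ((1 / 2) * R * u₂ ^ 2 + (1 / 2) * χ ^ 2 * v₁ ^ 2 + R * κ ^ 2 * (1 - Real.cos u₁) - α * (v₁ * (R * u₂ * Real.sin u₁)))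
          = β * (((1 / 2) * v₂ ^ 2 + (1 / 2) * R * u₂ ^ 2 - R * v₂ * u₂ * Real.sin u₁ + (1 / 2) * χ ^ 2 * v₁ ^ 2 + R * κ ^ 2 * (1 - Real.cos u₁)) + α * (v₁ * (v₂ - R * u₂ * Real.sin u₁))) from by ring]
    ring
  have e6 : deriv (fun x => deriv (fun y => Real.exp (β * (((1 / 2) * x ^ 2 + (1 / 2) * R * y ^ 2 - R * x * y * Real.sin u₁ + (1 / 2) * χ ^ 2 * v₁ ^ 2 + R * κ ^ 2 * (1 - Real.cos u₁)) + α * (v₁ * (x - R * y * Real.sin u₁))))) u₂) v₂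
      = (-(β * (R * Real.sin u₁)) + β * (R * u₂ - R * v₂ * Real.sin u₁ - α * (v₁ * (R * Real.sin u₁)))
            * (β * (v₂ - R * u₂ * Real.sin u₁ + α * v₁))) * Real.exp (β * (((1 / 2) * v₂ ^ 2 + (1 / 2) * R * u₂ ^ 2 - R * v₂ * u₂ * Real.sin u₁ + (1 / 2) * χ ^ 2 * v₁ ^ 2 + R * κ ^ 2 * (1 - Real.cos u₁)) + α * (v₁ * (v₂ - R * u₂ * Real.sin u₁)))) := by
    have hfun : (fun x => deriv (fun y => Real.exp (β * (((1 / 2) * x ^ 2 + (1 / 2) * R * y ^ 2 - R * x * y * Real.sin u₁ + (1 / 2) * χ ^ 2 * v₁ ^ 2 + R * κ ^ 2 * (1 - Real.cos u₁)) + α * (v₁ * (x - R * y * Real.sin u₁))))) u₂)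
        = fun t => ((-(β * (R * Real.sin u₁))) * t + β * (R * u₂ - α * (v₁ * (R * Real.sin u₁))))
            * Real.exp ((β * (1 / 2)) * t ^ 2 + (β * (α * v₁ - R * u₂ * Real.sin u₁)) * t
                + β * ((1 / 2) * R * u₂ ^ 2 + (1 / 2) * χ ^ 2 * v₁ ^ 2 + R * κ ^ 2 * (1 - Real.cos u₁) - α * (v₁ * (R * u₂ * Real.sin u₁)))) := by
      funext t
      rw [e4 t u₂, show β * (((1 / 2) * t ^ 2 + (1 / 2) * R * u₂ ^ 2 - R * t * u₂ * Real.sin u₁ + (1 / 2) * χ ^ 2 * v₁ ^ 2 + R * κ ^ 2 * (1 - Real.cos u₁)) + α * (v₁ * (t - R * u₂ * Real.sin u₁)))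
          = (β * (1 / 2)) * t ^ 2 + (β * (α * v₁ - R * u₂ * Real.sin u₁)) * t
            + β * ((1 / 2) * R * u₂ ^ 2 + (1 / 2) * χ ^ 2 * v₁ ^ 2 + R * κ ^ 2 * (1 - Real.cos u₁) - α * (v₁ * (R * u₂ * Real.sin u₁))) from by ring]
      ring
    rw [hfun, deriv_linexp,
      show (β * (1 / 2)) * v₂ ^ 2 + (β * (α * v₁ - R * u₂ * Real.sin u₁)) * v₂
            + β * ((1 / 2) * R * u₂ ^ 2 + (1 / 2) * χ ^ 2 * v₁ ^ 2 + R * κ ^ 2 * (1 - Real.cos u₁) - α * (v₁ * (R * u₂ * Real.sin u₁)))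
          = β * (((1 / 2) * v₂ ^ 2 + (1 / 2) * R * u₂ ^ 2 - R * v₂ * u₂ * Real.sin u₁ + (1 / 2) * χ ^ 2 * v₁ ^ 2 + R * κ ^ 2 * (1 - Real.cos u₁)) + α * (v₁ * (v₂ - R * u₂ * Real.sin u₁))) from by ring]
    ring
  have e7 : deriv (fun x => deriv (fun y => Real.exp (β * (((1 / 2) * v₂ ^ 2 + (1 / 2) * R * y ^ 2 - R * v₂ * y * Real.sin u₁ + (1 / 2) * χ ^ 2 * v₁ ^ 2 + R * κ ^ 2 * (1 - Real.cos u₁)) + α * (v₁ * (v₂ - R * y * Real.sin u₁))))) x) u₂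
      = (β * R + (β * (R * u₂ - R * v₂ * Real.sin u₁ - α * (v₁ * (R * Real.sin u₁)))) ^ 2) * Real.exp (β * (((1 / 2) * v₂ ^ 2 + (1 / 2) * R * u₂ ^ 2 - R * v₂ * u₂ * Real.sin u₁ + (1 / 2) * χ ^ 2 * v₁ ^ 2 + R * κ ^ 2 * (1 - Real.cos u₁)) + α * (v₁ * (v₂ - R * u₂ * Real.sin u₁)))) := by
    have hfun : (fun x => deriv (fun y => Real.exp (β * (((1 / 2) * v₂ ^ 2 + (1 / 2) * R * y ^ 2 - R * v₂ * y * Real.sin u₁ + (1 / 2) * χ ^ 2 * v₁ ^ 2 + R * κ ^ 2 * (1 - Real.cos u₁)) + α * (v₁ * (v₂ - R * y * Real.sin u₁))))) x)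
        = fun t => ((β * R) * t + β * (-(R * v₂ * Real.sin u₁) - α * (v₁ * (R * Real.sin u₁))))
            * Real.exp ((β * (R / 2)) * t ^ 2 + (β * (-(R * v₂ * Real.sin u₁) - α * (v₁ * (R * Real.sin u₁)))) * t
                + β * ((1 / 2) * v₂ ^ 2 + (1 / 2) * χ ^ 2 * v₁ ^ 2 + R * κ ^ 2 * (1 - Real.cos u₁) + α * (v₁ * v₂))) := by
      funext t
      rw [e4 v₂ t, show β * (((1 / 2) * v₂ ^ 2 + (1 / 2) * R * t ^ 2 - R * v₂ * t * Real.sin u₁ + (1 / 2) * χ ^ 2 * v₁ ^ 2 + R * κ ^ 2 * (1 - Real.cos u₁)) + α * (v₁ * (v₂ - R * t * Real.sin u₁)))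
          = (β * (R / 2)) * t ^ 2 + (β * (-(R * v₂ * Real.sin u₁) - α * (v₁ * (R * Real.sin u₁)))) * t
            + β * ((1 / 2) * v₂ ^ 2 + (1 / 2) * χ ^ 2 * v₁ ^ 2 + R * κ ^ 2 * (1 - Real.cos u₁) + α * (v₁ * v₂)) from by ring]
      ring
    rw [hfun, deriv_linexp,
      show (β * (R / 2)) * u₂ ^ 2 + (β * (-(R * v₂ * Real.sin u₁) - α * (v₁ * (R * Real.sin u₁)))) * u₂
            + β * ((1 / 2) * v₂ ^ 2 + (1 / 2) * χ ^ 2 * v₁ ^ 2 + R * κ ^ 2 * (1 - Real.cos u₁) + α * (v₁ * v₂))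
          = β * (((1 / 2) * v₂ ^ 2 + (1 / 2) * R * u₂ ^ 2 - R * v₂ * u₂ * Real.sin u₁ + (1 / 2) * χ ^ 2 * v₁ ^ 2 + R * κ ^ 2 * (1 - Real.cos u₁)) + α * (v₁ * (v₂ - R * u₂ * Real.sin u₁))) from by ring]
    ring
  unfold genL
  rw [e1, e2 v₂, e3, e4 v₂ u₂, e5, e6, e7]
  field_simp
  ring

set_option maxHeartbeats 1000000 in
/-- Exponential Lyapunov function estimate: there exist  and 
such that for every  there is a constant  with
, where . -/
theorem lyapunov_exp_estimate (ζ₁ ζ₂ χ κ ν R : ℝ)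
    (hζ₁ : 0 < ζ₁) (hζ₂ : 0 < ζ₂) (hχ : 0 < χ) (hκ : 0 < κ) (hν : 0 < ν)
    (hR0 : 0 < R) (hR1 : R < 1) :
    ∃ α β₀ : ℝ, 0 < α ∧ 0 < β₀ ∧
      ∀ γ : ℝ, 0 < γ → ∃ c₆ : ℝ,
        ∀ v₁ v₂ u₁ u₂ : ℝ,
          genL ζ₁ ζ₂ χ κ ν R
            (fun v₁ v₂ u₁ u₂ =>
              Real.exp (β₀ *
                (((1 / 2) * v₂ ^ 2 + (1 / 2) * R * u₂ ^ 2 - R * v₂ * u₂ * Real.sin u₁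
                    + (1 / 2) * χ ^ 2 * v₁ ^ 2 + R * κ ^ 2 * (1 - Real.cos u₁))
                  + α * (v₁ * (v₂ - R * u₂ * Real.sin u₁)))))
            v₁ v₂ u₁ u₂
          ≤ -γ * Real.exp (β₀ *
                (((1 / 2) * v₂ ^ 2 + (1 / 2) * R * u₂ ^ 2 - R * v₂ * u₂ * Real.sin u₁
                    + (1 / 2) * χ ^ 2 * v₁ ^ 2 + R * κ ^ 2 * (1 - Real.cos u₁))
                  + α * (v₁ * (v₂ - R * u₂ * Real.sin u₁)))) + c₆ := by
  
  have hν2 : 0 < ν ^ 2 := pow_pos hν 2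
  have hχ2 : 0 < χ ^ 2 := pow_pos hχ 2
  obtain ⟨α, hαdef⟩ : ∃ a : ℝ, a = min (min (2 * ζ₂) (ζ₁ / 4)) (χ ^ 2 / (8 * ζ₁)) := ⟨_, rfl⟩
  have hα : 0 < α := by
    rw [hαdef]
    exact lt_min (lt_min (by linarith) (by linarith)) (div_pos hχ2 (by linarith))
  obtain ⟨β, hβdef⟩ : ∃ b : ℝ, b = min (ζ₁ / (2 * ν ^ 2)) (χ ^ 2 / (4 * ν ^ 2 * α)) := ⟨_, rfl⟩
  have hβ : 0 < β := by
    rw [hβdef]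
    exact lt_min (div_pos hζ₁ (by linarith))
      (div_pos hχ2 (by linarith [mul_pos hν2 hα]))
  have hα1 : α ≤ 2 * ζ₂ := by rw [hαdef]; exact le_trans (min_le_left _ _) (min_le_left _ _)
  have hα2 : α ≤ ζ₁ / 4 := by rw [hαdef]; exact le_trans (min_le_left _ _) (min_le_right _ _)
  have hα3 : 8 * ζ₁ * α ≤ χ ^ 2 := by
    have h := min_le_right (min (2 * ζ₂) (ζ₁ / 4)) (χ ^ 2 / (8 * ζ₁))
    rw [le_div_iff₀ (by linarith : (0:ℝ) < 8 * ζ₁)] at h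
    rw [hαdef]; linarith
  have hβ1 : 2 * ν ^ 2 * β ≤ ζ₁ := by
    have h := min_le_left (ζ₁ / (2 * ν ^ 2)) (χ ^ 2 / (4 * ν ^ 2 * α))
    rw [le_div_iff₀ (by linarith : (0:ℝ) < 2 * ν ^ 2)] at h
    rw [hβdef]; linarith
  have hβ2 : 4 * ν ^ 2 * α * β ≤ χ ^ 2 := by
    have h := min_le_right (ζ₁ / (2 * ν ^ 2)) (χ ^ 2 / (4 * ν ^ 2 * α))
    rw [le_div_iff₀ (by linarith [mul_pos hν2 hα] : (0:ℝ) < 4 * ν ^ 2 * α)] at h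
    rw [hβdef]; linarith
  clear hαdef hβdef
  obtain ⟨C₀, hC₀def⟩ : ∃ c : ℝ, c = ν ^ 2 / (2 * (1 - R)) := ⟨_, rfl⟩
  have hC₀ : 0 < C₀ := by rw [hC₀def]; exact div_pos hν2 (by linarith)
  obtain ⟨δ, hδdef⟩ : ∃ d : ℝ, d = min (α * χ ^ 2 / 2) (min (ζ₁ / 2) (R * ζ₂)) := ⟨_, rfl⟩
  have hδ : 0 < δ := by
    rw [hδdef]
    exact lt_min (by linarith [mul_pos hα hχ2]) (lt_min (by linarith) (mul_pos hR0 hζ₂))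
  have hδ1 : δ ≤ α * χ ^ 2 / 2 := by rw [hδdef]; exact min_le_left _ _
  have hδ2 : δ ≤ ζ₁ / 2 := by rw [hδdef]; exact le_trans (min_le_right _ _) (min_le_left _ _)
  have hδ3 : δ ≤ R * ζ₂ := by rw [hδdef]; exact le_trans (min_le_right _ _) (min_le_right _ _)
  obtain ⟨M, hMdef⟩ : ∃ m : ℝ, m = 1 + R + χ ^ 2 + 2 * R * κ ^ 2 + α + α * R := ⟨_, rfl⟩
  have hM : 0 < M := by
    rw [hMdef]
    have := mul_nonneg hR0.le (sq_nonneg κ)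
    have := mul_nonneg hα.le hR0.le
    linarith
  clear hδdef
  refine ⟨α, β, hα, hβ, ?_⟩
  intro γ hγ
  have hγβC : 0 < γ + β * C₀ := by have := mul_pos hβ hC₀; linarith
  refine ⟨Real.exp (β * (M * (1 + (γ + β * C₀) / (β * δ)))) * (γ + β * C₀), ?_⟩
  intro v₁ v₂ u₁ u₂
  have hs2 : Real.sin u₁ ^ 2 ≤ 1 := Real.sin_sq_le_one u₁
  have hc1 : -1 ≤ Real.cos u₁ := Real.neg_one_le_cos u₁
  have hRs : 0 ≤ R * (1 - Real.sin u₁ ^ 2) := mul_nonneg hR0.le (by linarith)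
  have hD0 : 0 < 1 - R * Real.sin u₁ ^ 2 := by nlinarith [hRs]
  rw [genL_exp ζ₁ ζ₂ χ κ ν R α β v₁ v₂ u₁ u₂ (ne_of_gt hD0)]
  generalize hBgen : (-(2 * ζ₁ * v₂ ^ 2) - 2 * R * ζ₂ * u₂ ^ 2 + α * (v₂ ^ 2 - R * v₂ * u₂ * Real.sin u₁ - 2 * ζ₁ * v₁ * v₂ - χ ^ 2 * v₁ ^ 2) + ν ^ 2 / (2 * (1 - R * Real.sin u₁ ^ 2)) + β * ν ^ 2 * (v₂ + α * v₁) ^ 2 / 2) = B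
  generalize hWgen : (((1 / 2) * v₂ ^ 2 + (1 / 2) * R * u₂ ^ 2 - R * v₂ * u₂ * Real.sin u₁ + (1 / 2) * χ ^ 2 * v₁ ^ 2 + R * κ ^ 2 * (1 - Real.cos u₁)) + α * (v₁ * (v₂ - R * u₂ * Real.sin u₁))) = W
  -- bound on the drift bracket
  have hB : B ≤ -δ * (v₁ ^ 2 + v₂ ^ 2 + u₂ ^ 2) + C₀ := by
    rw [← hBgen]
    have A1 : α * R * (-(v₂ * u₂ * Real.sin u₁)) ≤ α * R * ((v₂ ^ 2 + u₂ ^ 2) / 2) := by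
      apply mul_le_mul_of_nonneg_left _ (mul_nonneg hα.le hR0.le)
      linarith [sq_nonneg (v₂ + u₂ * Real.sin u₁), mul_nonneg (sq_nonneg u₂) (sub_nonneg.2 hs2)]
    have A2 : -(2 * α * ζ₁ * (v₁ * v₂)) ≤ ζ₁ / 2 * v₂ ^ 2 + 2 * ζ₁ * α ^ 2 * v₁ ^ 2 := by
      linarith [mul_nonneg hζ₁.le (sq_nonneg (v₂ + 2 * α * v₁))]
    have A3 : ν ^ 2 / (2 * (1 - R * Real.sin u₁ ^ 2)) ≤ C₀ := by
      rw [hC₀def]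
      exact div_le_div_of_nonneg_left hν2.le (by linarith) (by linarith [hRs])
    have A4 : β * ν ^ 2 * (v₂ + α * v₁) ^ 2 / 2 ≤ β * ν ^ 2 * v₂ ^ 2 + β * ν ^ 2 * α ^ 2 * v₁ ^ 2 := by
      linarith [mul_nonneg (mul_nonneg hβ.le (sq_nonneg ν)) (sq_nonneg (v₂ - α * v₁))]
    have A5 : β * ν ^ 2 * v₂ ^ 2 ≤ ζ₁ / 2 * v₂ ^ 2 := by
      apply mul_le_mul_of_nonneg_right _ (sq_nonneg v₂); linarith
    have A6 : β * ν ^ 2 * α ^ 2 * v₁ ^ 2 ≤ χ ^ 2 / 4 * (α * v₁ ^ 2) := by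
      have h := mul_le_mul_of_nonneg_right hβ2 (mul_nonneg hα.le (sq_nonneg v₁))
      linarith [h]
    have A7 : 2 * ζ₁ * α ^ 2 * v₁ ^ 2 ≤ χ ^ 2 / 4 * (α * v₁ ^ 2) := by
      have h := mul_le_mul_of_nonneg_right hα3 (mul_nonneg hα.le (sq_nonneg v₁))
      linarith [h]
    have A8 : (α + α * R / 2) * v₂ ^ 2 ≤ ζ₁ / 2 * v₂ ^ 2 := by
      apply mul_le_mul_of_nonneg_right _ (sq_nonneg v₂)
      have := mul_nonneg hα.le (by linarith : (0:ℝ) ≤ 1 - R)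
      linarith
    have A9 : α * R / 2 * u₂ ^ 2 ≤ R * ζ₂ * u₂ ^ 2 := by
      apply mul_le_mul_of_nonneg_right _ (sq_nonneg u₂)
      have := mul_nonneg hR0.le (by linarith : (0:ℝ) ≤ 2 * ζ₂ - α)
      linarith
    have A10 : δ * v₁ ^ 2 ≤ α * χ ^ 2 / 2 * v₁ ^ 2 := mul_le_mul_of_nonneg_right hδ1 (sq_nonneg v₁)
    have A11 : δ * v₂ ^ 2 ≤ ζ₁ / 2 * v₂ ^ 2 := mul_le_mul_of_nonneg_right hδ2 (sq_nonneg v₂)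
    have A12 : δ * u₂ ^ 2 ≤ R * ζ₂ * u₂ ^ 2 := mul_le_mul_of_nonneg_right hδ3 (sq_nonneg u₂)
    linarith [A1, A2, A3, A4, A5, A6, A7, A8, A9, A10, A11, A12]
  -- bound on the Lyapunov function itself
  have hW : W ≤ M * (1 + (v₁ ^ 2 + v₂ ^ 2 + u₂ ^ 2)) := by
    rw [← hWgen]
    have Q1 : R * (-(v₂ * u₂ * Real.sin u₁)) ≤ R * ((v₂ ^ 2 + u₂ ^ 2) / 2) := by
      apply mul_le_mul_of_nonneg_left _ hR0.le
      linarith [sq_nonneg (v₂ + u₂ * Real.sin u₁), mul_nonneg (sq_nonneg u₂) (sub_nonneg.2 hs2)]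
    have Q2 : α * (v₁ * v₂) ≤ α * ((v₁ ^ 2 + v₂ ^ 2) / 2) := by
      apply mul_le_mul_of_nonneg_left _ hα.le
      linarith [sq_nonneg (v₁ - v₂)]
    have Q3 : α * R * (-(v₁ * u₂ * Real.sin u₁)) ≤ α * R * ((v₁ ^ 2 + u₂ ^ 2) / 2) := by
      apply mul_le_mul_of_nonneg_left _ (mul_nonneg hα.le hR0.le)
      linarith [sq_nonneg (v₁ + u₂ * Real.sin u₁), mul_nonneg (sq_nonneg u₂) (sub_nonneg.2 hs2)]
    have Q4 : R * κ ^ 2 * (1 - Real.cos u₁) ≤ R * κ ^ 2 * 2 := by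
      apply mul_le_mul_of_nonneg_left _ (mul_nonneg hR0.le (sq_nonneg κ))
      linarith
    have f1 : (0:ℝ) ≤ χ ^ 2 := sq_nonneg χ
    have f2 : (0:ℝ) ≤ R * κ ^ 2 := mul_nonneg hR0.le (sq_nonneg κ)
    have f3 : (0:ℝ) ≤ α * R := mul_nonneg hα.le hR0.le
    have R1 : ((1 / 2) * χ ^ 2 + α / 2 + α * R / 2) * v₁ ^ 2 ≤ M * v₁ ^ 2 := by
      apply mul_le_mul_of_nonneg_right _ (sq_nonneg v₁)
      rw [hMdef]; linarith
    have R2 : (1 / 2 + R / 2 + α / 2) * v₂ ^ 2 ≤ M * v₂ ^ 2 := by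
      apply mul_le_mul_of_nonneg_right _ (sq_nonneg v₂)
      rw [hMdef]; linarith
    have R3 : ((1 / 2) * R + R / 2 + α * R / 2) * u₂ ^ 2 ≤ M * u₂ ^ 2 := by
      apply mul_le_mul_of_nonneg_right _ (sq_nonneg u₂)
      rw [hMdef]; linarith
    have hconst : 2 * R * κ ^ 2 ≤ M := by rw [hMdef]; linarith
    linarith [Q1, Q2, Q3, Q4, R1, R2, R3, hconst]
  clear hBgen hWgen hMdef hC₀def
  -- key bound
  have hQnn : (0:ℝ) ≤ v₁ ^ 2 + v₂ ^ 2 + u₂ ^ 2 := by positivity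
  have key : Real.exp (β * W) * (β * B + γ)
      ≤ Real.exp (β * (M * (1 + (γ + β * C₀) / (β * δ)))) * (γ + β * C₀) := by
    rcases le_total (β * B + γ) 0 with h | h
    · exact le_trans (mul_nonpos_of_nonneg_of_nonpos (Real.exp_pos _).le h)
        (mul_nonneg (Real.exp_pos _).le hγβC.le)
    · have hQle : v₁ ^ 2 + v₂ ^ 2 + u₂ ^ 2 ≤ (γ + β * C₀) / (β * δ) := by
        rw [le_div_iff₀ (mul_pos hβ hδ)]
        linarith [mul_le_mul_of_nonneg_left hB hβ.le]
      have hexp : β * W ≤ β * (M * (1 + (γ + β * C₀) / (β * δ))) := by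
        apply mul_le_mul_of_nonneg_left _ hβ.le
        calc W ≤ M * (1 + (v₁ ^ 2 + v₂ ^ 2 + u₂ ^ 2)) := hW
          _ ≤ M * (1 + (γ + β * C₀) / (β * δ)) := by
              apply mul_le_mul_of_nonneg_left _ hM.le
              linarith
      have hsum : β * B + γ ≤ γ + β * C₀ := by
        have h1 := mul_le_mul_of_nonneg_left hB hβ.le
        have h2 := mul_nonneg (mul_nonneg hβ.le hδ.le) hQnn
        linarith [h1, h2]
      exact mul_le_mul (Real.exp_le_exp.mpr hexp) hsum h (Real.exp_pos _).le
  linarith [key]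
end

section
/- Let A be a real d×d Hurwitz matrix (all eigenvalues of A have strictly negative real part) and B a real d×m matrix. Then the integral R = ∫₀^∞ e^{tA} B Bᵀ e^{tAᵀ} dt converges, and R satisfies the Lyapunov equation A R + R Aᵀ = −B Bᵀ. -/
open MeasureTheory
open scoped Matrix

section GramianHelpers

open NormedSpace Filter

variable {d : ℕ}

attribute [local instance] Matrix.linftyOpNormedRing Matrix.linftyOpNormedAlgebra

private lemma entry_le_linfty (M : Matrix (Fin d) (Fin d) ℝ) (i j : Fin d) : |M i j| ≤ ‖M‖ := by
  rw [Matrix.linfty_opNorm_def]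
  calc |M i j| = ‖M i j‖ := rfl
    _ ≤ ((∑ k, ‖M i k‖₊ : NNReal) : ℝ) := by
        push_cast
        exact Finset.single_le_sum (f := fun k => ‖M i k‖) (fun k _ => norm_nonneg _)
          (Finset.mem_univ j)
    _ ≤ _ := by
        exact_mod_cast NNReal.coe_le_coe.mpr
          (Finset.le_sup (f := fun i => ∑ j, ‖M i j‖₊) (Finset.mem_univ i))

private lemma matrix_spectrum_eq (N : Matrix (Fin d) (Fin d) ℂ) :
    spectrum ℂ N = {μ | Module.End.HasEigenvalue (Matrix.toLinAlgEquiv' N) μ} := by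
  ext μ
  rw [Set.mem_setOf_eq, Module.End.hasEigenvalue_iff_mem_spectrum, AlgEquiv.spectrum_eq]

private lemma spectrum_exp_subset (M : Matrix (Fin d) (Fin d) ℂ) :
    ∀ z ∈ spectrum ℂ (exp M), ∃ μ ∈ spectrum ℂ M, z = Complex.exp μ := by
  intro z hz
  set f := Matrix.toLinAlgEquiv' M with hf
  set g := Matrix.toLinAlgEquiv' (exp M) with hg
  rw [matrix_spectrum_eq] at hz
  have hcomm : f ∘ₗ g = g ∘ₗ f := by
    have : Commute M (exp M) := (Commute.refl M).exp_right
    have h2 : Commute f g := this.map (Matrix.toLinAlgEquiv' : _ ≃ₐ[ℂ] _)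
    exact h2
  set E := Module.End.eigenspace g z with hE
  have hEinv : ∀ x ∈ E, f x ∈ E := by
    intro x hx
    rw [hE, Module.End.mem_eigenspace_iff] at hx ⊢
    calc g (f x) = f (g x) := by rw [← LinearMap.comp_apply, ← hcomm]; rfl
      _ = z • f x := by rw [hx, _root_.map_smul]
  have hnt : Nontrivial E := Submodule.nontrivial_iff_ne_bot.mpr hz
  obtain ⟨μ, hμ⟩ := Module.End.exists_eigenvalue (f.restrict hEinv)
  obtain ⟨w, hw⟩ := hμ.exists_hasEigenvector
  set v : Fin d → ℂ := (w : Fin d → ℂ) with hv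
  have hv0 : v ≠ 0 := fun h => hw.2 (by exact_mod_cast Subtype.ext h)
  have hfv : f v = μ • v := by
    have := hw.apply_eq_smul
    have h2 := congrArg (Subtype.val) this
    simpa using h2
  have hμmem : μ ∈ spectrum ℂ M := by
    rw [matrix_spectrum_eq]
    exact Module.End.hasEigenvalue_of_hasEigenvector
      ⟨Module.End.mem_eigenspace_iff.mpr hfv, hv0⟩
  refine ⟨μ, hμmem, ?_⟩
  have hMv : M.mulVec v = μ • v := hfv
  have hpow : ∀ n : ℕ, (M ^ n).mulVec v = (μ ^ n) • v := by
    intro n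
    induction n with
    | zero => simp [Matrix.one_mulVec]
    | succ n ih =>
        rw [pow_succ', pow_succ', ← Matrix.mulVec_mulVec, ih, Matrix.mulVec_smul, hMv,
          smul_smul, mul_comm]
  have hgv : (exp M).mulVec v = z • v := by
    have := (Module.End.mem_eigenspace_iff).mp w.2
    exact this
  let φ : Matrix (Fin d) (Fin d) ℂ →ₗ[ℂ] (Fin d → ℂ) :=
    { toFun := fun N => N.mulVec v
      map_add' := fun N₁ N₂ => Matrix.add_mulVec _ _ _
      map_smul' := fun c N => Matrix.smul_mulVec c N v }
  have hev : (exp M).mulVec v = Complex.exp μ • v := by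
    have hsum : Summable fun n : ℕ => ((n.factorial : ℂ)⁻¹) • M ^ n := expSeries_summable' M
    have h1 : (exp M).mulVec v = ∑' n : ℕ, (((n.factorial : ℂ)⁻¹) • M ^ n).mulVec v := by
      rw [exp_eq_tsum ℂ]
      exact (φ.toContinuousLinearMap.map_tsum hsum)
    have h2 : ∀ n : ℕ, (((n.factorial : ℂ)⁻¹) • M ^ n).mulVec v
        = ((n.factorial : ℂ)⁻¹ * μ ^ n) • v := by
      intro n
      rw [Matrix.smul_mulVec, hpow, smul_smul]
    rw [h1]
    simp_rw [h2]
    rw [Summable.tsum_smul_const]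
    · congr 1
      rw [Complex.exp_eq_exp_ℂ, exp_eq_tsum ℂ]
      simp_rw [smul_eq_mul]
    · simpa [smul_eq_mul] using expSeries_summable' (𝕂 := ℂ) μ
  have : (z - Complex.exp μ) • v = 0 := by
    rw [sub_smul, hgv.symm.trans hev]
    simp
  rcases smul_eq_zero.mp this with h | h
  · exact (sub_eq_zero.mp h)
  · exact absurd h hv0

private lemma norm_map_ofReal (N : Matrix (Fin d) (Fin d) ℝ) :
    ‖N.map Complex.ofReal‖ = ‖N‖ := by
  rw [Matrix.linfty_opNorm_def, Matrix.linfty_opNorm_def]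
  congr 1
  congr 1
  ext i
  congr 1
  ext j
  simp [Matrix.map_apply]

private lemma map_exp_ofReal (N : Matrix (Fin d) (Fin d) ℝ) :
    (exp N).map Complex.ofReal = exp (N.map Complex.ofReal) := by
  let ψ : Matrix (Fin d) (Fin d) ℝ →ₗ[ℝ] Matrix (Fin d) (Fin d) ℂ :=
    { toFun := fun N => N.map Complex.ofReal
      map_add' := fun X Y => by ext i j; simp [Matrix.map_apply]
      map_smul' := fun c X => by ext i j; simp [Matrix.map_apply] }
  have hc : Continuous (Complex.ofRealHom.mapMatrix :
      Matrix (Fin d) (Fin d) ℝ →+* Matrix (Fin d) (Fin d) ℂ) :=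
    ψ.continuous_of_finiteDimensional
  have h1 := map_exp (Complex.ofRealHom.mapMatrix :
      Matrix (Fin d) (Fin d) ℝ →+* Matrix (Fin d) (Fin d) ℂ) hc N
  have h2 : (exp (N.map Complex.ofReal)) = exp (N.map Complex.ofReal) := by
    rfl
  rw [← h2]
  exact h1

private lemma spectrum_transpose (N : Matrix (Fin d) (Fin d) ℂ) :
    spectrum ℂ Nᵀ = spectrum ℂ N := by
  ext μ
  simp only [spectrum.mem_iff, not_iff_not, Matrix.isUnit_iff_isUnit_det]
  have key : (algebraMap ℂ (Matrix (Fin d) (Fin d) ℂ) μ - Nᵀ) =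
      (algebraMap ℂ (Matrix (Fin d) (Fin d) ℂ) μ - N)ᵀ := by
    rw [Matrix.transpose_sub]
    congr 1
    rw [Algebra.algebraMap_eq_smul_one, Matrix.transpose_smul, Matrix.transpose_one]
  rw [key, Matrix.det_transpose]

private lemma exp_decay_of_spectrum (M : Matrix (Fin d) (Fin d) ℝ)
    (hM : ∀ μ ∈ spectrum ℂ (M.map Complex.ofReal), μ.re < 0) :
    ∃ C > 0, ∃ ε > 0, ∀ t ≥ 0, ‖exp (t • M)‖ ≤ C * Real.exp (-ε * t) := by
  rcases Nat.eq_zero_or_pos d with hd | hd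
  · refine ⟨1, one_pos, 1, one_pos, fun t ht => ?_⟩
    subst hd
    haveI : Subsingleton (Matrix (Fin 0) (Fin 0) ℝ) := by
      constructor; intro a b; ext i j; exact absurd i.2 (by omega)
    rw [Subsingleton.elim (exp (t • M)) 0, norm_zero]
    positivity
  haveI : Nonempty (Fin d) := Fin.pos_iff_nonempty.mp hd
  set Mc := M.map Complex.ofReal with hMc
  set a := exp Mc with ha
  obtain ⟨μ₀, hμ₀mem, hμ₀max⟩ := (spectrum.isCompact Mc).exists_isMaxOn
    (spectrum.nonempty Mc) (Complex.continuous_re.continuousOn)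
  set δ : ℝ := μ₀.re with hδdef
  have hδ : δ < 0 := hM μ₀ hμ₀mem
  set ρ : ℝ := Real.exp (δ / 2) with hρdef
  have hρpos : 0 < ρ := Real.exp_pos _
  have hρlt1 : ρ < 1 := by
    rw [hρdef, ← Real.exp_zero]
    exact Real.exp_lt_exp.mpr (by linarith)
  set nρ : NNReal := ⟨ρ, hρpos.le⟩ with hnρ
  have hsr : spectralRadius ℂ a < (nρ : ENNReal) := by
    apply spectrum.spectralRadius_lt_of_forall_lt
    intro z hz
    obtain ⟨μ, hμmem, rfl⟩ := spectrum_exp_subset Mc z hz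
    have h1 : ‖Complex.exp μ‖ = Real.exp μ.re := Complex.norm_exp μ
    have h2 : μ.re ≤ δ := hμ₀max hμmem
    have h3 : ‖Complex.exp μ‖ < ρ := by
      rw [h1, hρdef]
      exact Real.exp_lt_exp.mpr (by linarith)
    have h4 : (‖Complex.exp μ‖₊ : ℝ) < (nρ : ℝ) := by exact h3
    exact_mod_cast h4
  have hgel := spectrum.pow_nnnorm_pow_one_div_tendsto_nhds_spectralRadius a
  have hev : ∀ᶠ n : ℕ in atTop, (‖a ^ n‖₊ : ENNReal) ^ (1 / (n : ℝ)) < (nρ : ENNReal) :=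
    hgel.eventually_lt_const hsr
  obtain ⟨N₀, hN₀⟩ := hev.exists_forall_of_atTop
  have hgeo : ∀ n : ℕ, N₀ + 1 ≤ n → ‖a ^ n‖ ≤ ρ ^ n := by
    intro n hn
    have hn0 : (n : ℝ) ≠ 0 := by
      have : 0 < n := lt_of_lt_of_le (Nat.succ_pos N₀) hn
      exact_mod_cast this.ne'
    have h1 := hN₀ n (le_trans (Nat.le_succ N₀) hn)
    have h2 := ENNReal.rpow_lt_rpow h1 (by positivity : (0:ℝ) < (n:ℝ))
    rw [← ENNReal.rpow_mul, one_div_mul_cancel hn0, ENNReal.rpow_one,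
      ENNReal.rpow_natCast, ← ENNReal.coe_pow, ENNReal.coe_lt_coe] at h2
    have h3 : ‖a ^ n‖ ≤ ((nρ ^ n : NNReal) : ℝ) := by
      rw [← coe_nnnorm (a ^ n)]
      exact_mod_cast h2.le
    rw [NNReal.coe_pow] at h3
    exact h3
  set C₀ : ℝ := 1 + ∑ k ∈ Finset.range (N₀ + 1), ‖a ^ k‖ / ρ ^ k with hC₀def
  have hC₀1 : 1 ≤ C₀ := by
    rw [hC₀def]
    have : 0 ≤ ∑ k ∈ Finset.range (N₀ + 1), ‖a ^ k‖ / ρ ^ k :=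
      Finset.sum_nonneg fun k _ => by positivity
    linarith
  have hbound : ∀ n : ℕ, ‖a ^ n‖ ≤ C₀ * ρ ^ n := by
    intro n
    rcases lt_or_ge n (N₀ + 1) with h | h
    · have h1 : ‖a ^ n‖ / ρ ^ n ≤ C₀ := by
        rw [hC₀def]
        have := Finset.single_le_sum (f := fun k => ‖a ^ k‖ / ρ ^ k)
          (fun k _ => by positivity) (Finset.mem_range.mpr h)
        linarith
      calc ‖a ^ n‖ = ‖a ^ n‖ / ρ ^ n * ρ ^ n := by field_simp
        _ ≤ C₀ * ρ ^ n := mul_le_mul_of_nonneg_right h1 (by positivity)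
    · exact (hgeo n h).trans (le_mul_of_one_le_left (by positivity) hC₀1)
  obtain ⟨C₁, hC₁⟩ := (isCompact_Icc (a := (0:ℝ)) (b := 1)).exists_bound_of_continuousOn
    (f := fun s : ℝ => exp (s • Mc))
    ((exp_continuous.comp (continuous_id.smul continuous_const)).continuousOn)
  set C₂ : ℝ := max C₁ 1 with hC₂def
  have hC₂pos : 0 < C₂ := lt_of_lt_of_le one_pos (le_max_right _ _)
  have hC₀pos : (0:ℝ) < C₀ := by linarith
  refine ⟨C₀ * C₂ * Real.exp (-(δ / 2)), by positivity, -(δ / 2), by linarith, fun t ht => ?_⟩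
  set n : ℕ := ⌊t⌋₊ with hn
  have hn1 : (n : ℝ) ≤ t := Nat.floor_le ht
  have hn2 : t - 1 < (n : ℝ) := Nat.sub_one_lt_floor t
  set s : ℝ := t - n with hs
  have hsmem : s ∈ Set.Icc (0:ℝ) 1 := ⟨by simp [hs]; linarith, by simp [hs]; linarith⟩
  have hmap : (t • M).map Complex.ofReal = t • Mc := by
    ext i j
    simp [Matrix.map_apply, hMc, Complex.real_smul]
  have key : ‖exp (t • M)‖ = ‖exp (t • Mc)‖ := by
    rw [← norm_map_ofReal, map_exp_ofReal, hmap]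
  have hsplit : exp (t • Mc) = a ^ n * exp (s • Mc) := by
    have h1 : t • Mc = (n : ℝ) • Mc + s • Mc := by
      rw [← add_smul]; congr 1; rw [hs]; ring
    erw [h1, exp_add_of_commute (((Commute.refl Mc).smul_left _).smul_right _)]
    congr 1
    rw [Nat.cast_smul_eq_nsmul ℝ n Mc, exp_nsmul]
    rfl
  have hnorm1 : ‖exp (s • Mc)‖ ≤ C₂ := le_trans (hC₁ s hsmem) (le_max_left _ _)
  have hρn : ρ ^ n ≤ Real.exp (-(δ / 2)) * Real.exp (-(-(δ / 2)) * t) := by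
    rw [hρdef, ← Real.exp_nat_mul, ← Real.exp_add]
    apply Real.exp_le_exp.mpr
    have hδ2 : δ / 2 < 0 := by linarith
    nlinarith [hn2, hδ2]
  calc ‖exp (t • M)‖ = ‖a ^ n * exp (s • Mc)‖ := by rw [key, hsplit]
    _ ≤ ‖a ^ n‖ * ‖exp (s • Mc)‖ := norm_mul_le _ _
    _ ≤ (C₀ * ρ ^ n) * C₂ := by
        have h0 : (0:ℝ) ≤ C₀ * ρ ^ n := mul_nonneg (by linarith) (by positivity)
        exact mul_le_mul (hbound n) hnorm1 (norm_nonneg _) h0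
    _ = C₀ * C₂ * ρ ^ n := by ring
    _ ≤ C₀ * C₂ * (Real.exp (-(δ / 2)) * Real.exp (-(-(δ / 2)) * t)) :=
        mul_le_mul_of_nonneg_left hρn (mul_nonneg hC₀pos.le hC₂pos.le)
    _ = C₀ * C₂ * Real.exp (-(δ / 2)) * Real.exp (-(-(δ / 2)) * t) := by ring

end GramianHelpers

/-- The controllability Gramian `R = ∫₀^∞ e^{tA} B Bᵀ e^{tAᵀ} dt`, defined entrywise. -/
noncomputable def gramian {d m : ℕ} (A : Matrix (Fin d) (Fin d) ℝ)
    (B : Matrix (Fin d) (Fin m) ℝ) : Matrix (Fin d) (Fin d) ℝ :=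
  Matrix.of fun i j => ∫ t in Set.Ioi (0 : ℝ),
    (NormedSpace.exp (t • A) * B * Bᵀ * NormedSpace.exp (t • Aᵀ)) i j

/-- For a Hurwitz matrix `A`, the integral defining the Gramian
`R = ∫₀^∞ e^{tA} B Bᵀ e^{tAᵀ} dt` converges (entrywise), and `R` satisfies the
Lyapunov equation `A R + R Aᵀ = −B Bᵀ`. -/
theorem gramian_integrable_and_lyapunov {d m : ℕ}
    (A : Matrix (Fin d) (Fin d) ℝ) (B : Matrix (Fin d) (Fin m) ℝ)
    (hA : ∀ μ ∈ spectrum ℂ (A.map Complex.ofReal), μ.re < 0) :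
    (∀ i j, IntegrableOn
        (fun t : ℝ =>
          (NormedSpace.exp (t • A) * B * Bᵀ * NormedSpace.exp (t • Aᵀ)) i j)
        (Set.Ioi 0))
    ∧ A * gramian A B + gramian A B * Aᵀ = -(B * Bᵀ) := by
  letI : NormedRing (Matrix (Fin d) (Fin d) ℝ) := Matrix.linftyOpNormedRing
  letI : NormedAlgebra ℝ (Matrix (Fin d) (Fin d) ℝ) := Matrix.linftyOpNormedAlgebra
  obtain ⟨C₁, hC₁, ε₁, hε₁, hdecay₁⟩ := exp_decay_of_spectrum A hA
  have hAT : ∀ μ ∈ spectrum ℂ (Aᵀ.map Complex.ofReal), μ.re < 0 := by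
    intro μ hμ
    apply hA
    rwa [Matrix.transpose_map, spectrum_transpose] at hμ
  obtain ⟨C₂, hC₂, ε₂, hε₂, hdecay₂⟩ := exp_decay_of_spectrum Aᵀ hAT
  set G : ℝ → Matrix (Fin d) (Fin d) ℝ := fun t =>
    NormedSpace.exp (t • A) * (B * Bᵀ) * NormedSpace.exp (t • Aᵀ) with hG
  have hFG : ∀ t : ℝ,
      NormedSpace.exp (t • A) * B * Bᵀ * NormedSpace.exp (t • Aᵀ) = G t := by
    intro t
    rw [hG, Matrix.mul_assoc (NormedSpace.exp (t • A)) B Bᵀ]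
  -- norm bound
  set K : ℝ := C₁ * ‖B * Bᵀ‖ * C₂ with hK
  have hGnorm : ∀ t : ℝ, 0 ≤ t → ‖G t‖ ≤ K * Real.exp (-(ε₁ + ε₂) * t) := by
    intro t ht
    calc ‖G t‖ ≤ ‖NormedSpace.exp (t • A) * (B * Bᵀ)‖ * ‖NormedSpace.exp (t • Aᵀ)‖ :=
          norm_mul_le _ _
      _ ≤ ‖NormedSpace.exp (t • A)‖ * ‖B * Bᵀ‖ * ‖NormedSpace.exp (t • Aᵀ)‖ :=
          mul_le_mul_of_nonneg_right (norm_mul_le _ _) (norm_nonneg _)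
      _ ≤ (C₁ * Real.exp (-ε₁ * t)) * ‖B * Bᵀ‖ * (C₂ * Real.exp (-ε₂ * t)) := by
          have h1 := hdecay₁ t ht
          have h2 := hdecay₂ t ht
          have hb : (0:ℝ) ≤ ‖B * Bᵀ‖ := norm_nonneg _
          have e1 : (0:ℝ) < Real.exp (-ε₁ * t) := Real.exp_pos _
          have e2 : (0:ℝ) < Real.exp (-ε₂ * t) := Real.exp_pos _
          nlinarith [norm_nonneg (NormedSpace.exp (t • A)),
            norm_nonneg (NormedSpace.exp (t • Aᵀ)),
            mul_le_mul h1 h2 (norm_nonneg _) (by positivity : (0:ℝ) ≤ C₁ * Real.exp (-ε₁ * t))]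
      _ = K * Real.exp (-(ε₁ + ε₂) * t) := by
          rw [hK]
          rw [show -(ε₁ + ε₂) * t = -ε₁ * t + -ε₂ * t by ring, Real.exp_add]
          ring
  -- derivative
  have hmderiv : ∀ t : ℝ, HasDerivAt G (A * G t + G t * Aᵀ) t := by
    intro t
    have h1 : HasDerivAt (fun u : ℝ => NormedSpace.exp (u • A))
        (A * NormedSpace.exp (t • A)) t := hasDerivAt_exp_smul_const' A t
    have h2 : HasDerivAt (fun u : ℝ => NormedSpace.exp (u • Aᵀ))
        (NormedSpace.exp (t • Aᵀ) * Aᵀ) t := hasDerivAt_exp_smul_const Aᵀ t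
    have h3 := (h1.mul_const (B * Bᵀ)).mul h2
    convert h3 using 1
    · rfl
    · rfl
    · rfl
    · rfl
    simp only [hG, Matrix.mul_assoc]
  let L : Fin d → Fin d → (Matrix (Fin d) (Fin d) ℝ →ₗ[ℝ] ℝ) := fun i j =>
    { toFun := fun X => X i j
      map_add' := fun X Y => rfl
      map_smul' := fun c X => rfl }
  have hderivE : ∀ (t : ℝ) (i j : Fin d),
      HasDerivAt (fun u : ℝ => G u i j) ((A * G t + G t * Aᵀ) i j) t := by
    intro t i j
    have := ((L i j).toContinuousLinearMap.hasFDerivAt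
        (x := G t)).comp_hasDerivAt t (hmderiv t)
    exact this
  have hGcont : ∀ i j, Continuous fun t : ℝ => G t i j := by
    intro i j
    rw [continuous_iff_continuousAt]
    exact fun t => (hderivE t i j).continuousAt
  -- the dominating function is integrable
  have hdom : IntegrableOn (fun t : ℝ => K * Real.exp (-(ε₁ + ε₂) * t)) (Set.Ioi 0) := by
    have h := exp_neg_integrableOn_Ioi 0 (by linarith : (0:ℝ) < ε₁ + ε₂)
    have h2 := h.const_mul K
    simpa [mul_comm, neg_mul, IntegrableOn] using h2
  -- Part 1: integrability of the entries
  have hGint : ∀ i j, IntegrableOn (fun t : ℝ => G t i j) (Set.Ioi 0) := by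
    intro i j
    apply Integrable.mono' hdom ((hGcont i j).aestronglyMeasurable.restrict)
    rw [ae_restrict_iff' measurableSet_Ioi]
    filter_upwards with t ht
    calc ‖G t i j‖ = |G t i j| := rfl
      _ ≤ ‖G t‖ := entry_le_linfty _ i j
      _ ≤ K * Real.exp (-(ε₁ + ε₂) * t) := hGnorm t (le_of_lt ht)
  -- tendsto 0 at infinity
  have hdom0 : Filter.Tendsto (fun t : ℝ => K * Real.exp (-(ε₁ + ε₂) * t))
      Filter.atTop (nhds 0) := by
    rw [show (0:ℝ) = K * 0 by ring]
    apply Filter.Tendsto.const_mul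
    apply Real.tendsto_exp_atBot.comp
    exact Filter.Tendsto.const_mul_atTop_of_neg (by linarith : -(ε₁ + ε₂) < 0) Filter.tendsto_id
  have hGtend : ∀ i j, Filter.Tendsto (fun t : ℝ => G t i j) Filter.atTop (nhds 0) := by
    intro i j
    apply squeeze_zero_norm' _ hdom0
    filter_upwards [Filter.eventually_ge_atTop (0:ℝ)] with t ht
    calc ‖G t i j‖ = |G t i j| := rfl
      _ ≤ ‖G t‖ := entry_le_linfty _ i j
      _ ≤ K * Real.exp (-(ε₁ + ε₂) * t) := hGnorm t ht
  have hG0 : G 0 = B * Bᵀ := by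
    rw [hG]
    simp only [zero_smul, NormedSpace.exp_zero, Matrix.one_mul, Matrix.mul_one]
  -- integrability of the derivative entries
  have hg'int : ∀ i j, IntegrableOn (fun t : ℝ => (A * G t + G t * Aᵀ) i j) (Set.Ioi 0) := by
    intro i j
    simp only [Matrix.add_apply, Matrix.mul_apply]
    apply Integrable.add
    · apply integrable_finset_sum
      intro k _
      exact (hGint k j).const_mul _
    · apply integrable_finset_sum
      intro k _
      exact (hGint i k).mul_const _
  -- FTC
  have hFTC : ∀ i j, ∫ t in Set.Ioi (0:ℝ), (A * G t + G t * Aᵀ) i j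
      = -((B * Bᵀ) i j) := by
    intro i j
    have h := integral_Ioi_of_hasDerivAt_of_tendsto' (a := (0:ℝ))
      (f := fun t : ℝ => G t i j) (f' := fun t : ℝ => (A * G t + G t * Aᵀ) i j)
      (fun t _ => hderivE t i j) (hg'int i j) (hGtend i j)
    rw [h]
    simp [hG0]
  constructor
  · intro i j
    have := hGint i j
    simp_rw [hFG]
    exact this
  · ext i j
    have hRapply : ∀ k l, gramian A B k l = ∫ t in Set.Ioi (0:ℝ), G t k l := by
      intro k l
      simp only [gramian, Matrix.of_apply]
      congr 1
      funext t
      rw [hFG]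
    simp only [Matrix.add_apply, Matrix.mul_apply, Matrix.neg_apply]
    have h1 : ∀ k, A i k * gramian A B k j = ∫ t in Set.Ioi (0:ℝ), A i k * G t k j := by
      intro k
      rw [hRapply, MeasureTheory.integral_const_mul]
    have h2 : ∀ k, gramian A B i k * Aᵀ k j = ∫ t in Set.Ioi (0:ℝ), G t i k * Aᵀ k j := by
      intro k
      rw [hRapply, MeasureTheory.integral_mul_const]
    simp_rw [h1, h2]
    rw [← MeasureTheory.integral_finset_sum _ (fun k _ => (hGint k j).const_mul _),
      ← MeasureTheory.integral_finset_sum _ (fun k _ => (hGint i k).mul_const _),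
      ← MeasureTheory.integral_add
        (integrable_finset_sum _ (fun k _ => (hGint k j).const_mul _))
        (integrable_finset_sum _ (fun k _ => (hGint i k).mul_const _))]
    have := hFTC i j
    simp only [Matrix.add_apply, Matrix.mul_apply] at this
    rw [this]
end
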